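/- arXiv:1807.01038 — 7 statements merged into one kernel-verified Lean document; each statement's English description precedes it below -/
import Mathlib

section
/- Let H : ℝ^d → ℝ be a C² integrable Hamiltonian with ‖d²H(p)‖ ≤ C for all p, let R = (R^t)_{t≥0} be a variational operator for H, and let u₀ : ℝ^d → ℝ be Lipschitz and B-semiconcave for some B > 0. Then for all 0 ≤ t ≤ 1/(BC) and all q ∈ ℝ^d, R^t u₀(q) = inf{S : (t,q,S) ∈ 𝓕_{u₀}} = inf{u₀(q₀) + t(p₀·∇H(p₀) − H(p₀)) : q₀ ∈ ℝ^d, p₀ ∈ ∂u₀(q₀), q₀ + t∇H(p₀) = q}. -/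
set_option maxHeartbeats 1000000

open Filter Topology Set InnerProductSpace RealInnerProductSpace

noncomputable section

/-- `ℝ^d` with the euclidean structure. -/
abbrev Ed (d : ℕ) := EuclideanSpace ℝ (Fin d)

/-- The Clarke derivative of a Lipschitz function `u : ℝ^d → ℝ` at `q`. -/
def clarke {d : ℕ} (u : Ed d → ℝ) (q : Ed d) : Set (Ed d) :=
  convexHull ℝ {p | ∃ qn : ℕ → Ed d,
    (∀ n, DifferentiableAt ℝ u (qn n)) ∧
    Tendsto qn atTop (𝓝 q) ∧
    Tendsto (fun n => gradient u (qn n)) atTop (𝓝 p)}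

/-- The generalized wavefront associated with a `C²` integrable Hamiltonian `H` and a
Lipschitz initial condition `u₀`. -/
def wavefront {d : ℕ} (H u₀ : Ed d → ℝ) : Set (ℝ × Ed d × ℝ) :=
  {x | ∃ (t : ℝ) (q₀ p₀ : Ed d), 0 ≤ t ∧ p₀ ∈ clarke u₀ q₀ ∧
    x = (t, q₀ + t • gradient H p₀,
         u₀ q₀ + t * ((inner ℝ p₀ (gradient H p₀) : ℝ) - H p₀))}

/-- A variational operator for an integrable Hamiltonian `H`: a family of operators on
Lipschitz functions which is monotone, additive with respect to constants, and satisfies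
the variational property (values given by the wavefront). -/
def IsVariationalOperator {d : ℕ} (H : Ed d → ℝ) (R : ℝ → (Ed d → ℝ) → Ed d → ℝ) : Prop :=
  (∀ t : ℝ, 0 ≤ t → ∀ u : Ed d → ℝ, (∃ K, LipschitzWith K u) →
      ∃ K, LipschitzWith K (R t u)) ∧
  (∀ t : ℝ, 0 ≤ t → ∀ u v : Ed d → ℝ, (∃ K, LipschitzWith K u) →
      (∃ K, LipschitzWith K v) → (∀ q, u q ≤ v q) → ∀ q, R t u q ≤ R t v q) ∧
  (∀ t : ℝ, 0 ≤ t → ∀ u : Ed d → ℝ, (∃ K, LipschitzWith K u) → ∀ c : ℝ, ∀ q,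
      R t (fun x => c + u x) q = c + R t u q) ∧
  (∀ t : ℝ, 0 ≤ t → ∀ u : Ed d → ℝ, (∃ K, LipschitzWith K u) → ∀ q : Ed d,
      ∃ q₀ p₀ : Ed d, p₀ ∈ clarke u q₀ ∧ q = q₀ + t • gradient H p₀ ∧
        R t u q = u q₀ + t * ((inner ℝ p₀ (gradient H p₀) : ℝ) - H p₀))

def psi (B r : ℝ) {d : ℕ} (y : Ed d) : ℝ :=
  if ‖y‖ ≤ r then B / 2 * ‖y‖ ^ 2 else B * r * ‖y‖ - B / 2 * r ^ 2

def rho (B r : ℝ) {d : ℕ} (y : Ed d) : Ed d := ((B * r) / max ‖y‖ r) • y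

lemma rho_cont {B r : ℝ} (hr : 0 < r) {d : ℕ} : Continuous (rho B r (d := d)) := by
  refine Continuous.smul (f := fun y : Ed d => (B * r) / max ‖y‖ r) (g := id) ?_ ?_
  · exact continuous_const.div (continuous_norm.max continuous_const)
      (fun y => ne_of_gt (lt_max_of_lt_right hr))
  · exact continuous_id

lemma inner_rho {B r : ℝ} {d : ℕ} (y z : Ed d) :
    ⟪rho B r y, z⟫_ℝ = (B * r) / max ‖y‖ r * ⟪y, z⟫_ℝ := real_inner_smul_left _ _ _

lemma psi_err {B r : ℝ} (hB : 0 < B) (hr : 0 < r) {d : ℕ} (y h : Ed d) :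
    |psi B r (y + h) - psi B r y - ⟪rho B r y, h⟫_ℝ| ≤ 2 * B * ‖h‖ ^ 2 := by
  have hss : ‖y + h‖ ^ 2 = ‖y‖ ^ 2 + 2 * ⟪y, h⟫_ℝ + ‖h‖ ^ 2 := norm_add_sq_real y h
  have hcs : |⟪y, h⟫_ℝ| ≤ ‖y‖ * ‖h‖ := abs_real_inner_le_norm y h
  have ht1 : ‖y + h‖ ≤ ‖y‖ + ‖h‖ := norm_add_le y h
  have ht2 : ‖y‖ ≤ ‖y + h‖ + ‖h‖ := by
    have := norm_sub_le (y + h) h; simpa using this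
  have hy0 : (0:ℝ) ≤ ‖y‖ := norm_nonneg y
  have hy'0 : (0:ℝ) ≤ ‖y + h‖ := norm_nonneg _
  have hh0 : (0:ℝ) ≤ ‖h‖ := norm_nonneg h
  rw [inner_rho, psi, psi]
  set c : ℝ := ⟪y, h⟫_ℝ with hc_def
  set s1 : ℝ := ‖y + h‖ with hs1_def
  set s2 : ℝ := ‖y‖ with hs2_def
  set u : ℝ := ‖h‖ with hu_def
  clear_value c s1 s2 u
  by_cases hy : s2 ≤ r
  · rw [max_eq_right hy]
    have hBr : B * r / r = B := by field_simp
    rw [hBr, if_pos hy]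
    by_cases hy' : s1 ≤ r
    · rw [if_pos hy']
      have hkey : B / 2 * s1 ^ 2 - B / 2 * s2 ^ 2 - B * c = B / 2 * u ^ 2 := by
        rw [hss]; ring
      rw [hkey, abs_of_nonneg (by positivity)]
      nlinarith
    · push_neg at hy'
      rw [if_neg (not_le.mpr hy')]
      have hkey : B * r * s1 - B / 2 * r ^ 2 - B / 2 * s2 ^ 2 - B * c
          = B / 2 * u ^ 2 - B / 2 * (s1 - r) ^ 2 := by
        linear_combination (B / 2) * hss
      rw [hkey]
      have h1 : s1 - r ≤ u := by linarith
      have h2 : (0:ℝ) ≤ s1 - r := by linarith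
      have hX2 : (s1 - r) ^ 2 ≤ u ^ 2 := by nlinarith
      rw [abs_le]
      constructor
      · nlinarith
      · nlinarith [sq_nonneg (s1 - r)]
  · push_neg at hy
    have hs0 : (0:ℝ) < s2 := lt_trans hr hy
    rw [max_eq_left hy.le, if_neg (not_le.mpr hy)]
    set e : ℝ := c / s2 with he_def
    have he : c = s2 * e := by rw [he_def]; field_simp
    have hBre : B * r / s2 * c = B * r * e := by rw [he]; field_simp
    have heabs : |e| ≤ u := by
      rw [he_def, abs_div, abs_of_pos hs0, div_le_iff₀ hs0]
      calc |c| ≤ s2 * u := hcs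
        _ = u * s2 := by ring
    have he1 : -u ≤ e := (abs_le.1 heabs).1
    have he2 : e ≤ u := (abs_le.1 heabs).2
    have hss' : s1 ^ 2 = s2 ^ 2 + 2 * s2 * e + u ^ 2 := by
      rw [hss, he]; ring
    rw [hBre]
    by_cases hy' : s1 ≤ r
    · rw [if_pos hy']
      have hsr : s2 - r ≤ u := by linarith
      have hsr0 : (0:ℝ) ≤ s2 - r := by linarith
      have hkey : B / 2 * s1 ^ 2 - (B * r * s2 - B / 2 * r ^ 2) - B * r * e
          = B / 2 * (s2 - r) ^ 2 + B * (s2 - r) * e + B / 2 * u ^ 2 := by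
        linear_combination (B / 2) * hss'
      rw [hkey, abs_le]
      have hp2 : (s2 - r) * e ≤ (s2 - r) * u := mul_le_mul_of_nonneg_left he2 hsr0
      have hp3 : (s2 - r) * u ≤ u * u := mul_le_mul_of_nonneg_right hsr hh0
      have hp4 : (s2 - r) ^ 2 ≤ u ^ 2 := by nlinarith
      have f1 : (0:ℝ) ≤ B / 2 * ((s2 - r) - u) ^ 2 := by positivity
      have f2 : (0:ℝ) ≤ B * ((s2 - r) * (u + e)) :=
        mul_nonneg hB.le (mul_nonneg hsr0 (by linarith))
      have f3 : B * ((s2 - r) ^ 2) ≤ B * u ^ 2 := mul_le_mul_of_nonneg_left hp4 hB.le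
      have f4 : B * ((s2 - r) * e) ≤ B * (u * u) :=
        mul_le_mul_of_nonneg_left (hp2.trans hp3) hB.le
      constructor
      · nlinarith [f1, f2]
      · nlinarith [f3, f4]
    · push_neg at hy'
      rw [if_neg (not_le.mpr hy')]
      have hsum : (0:ℝ) < s1 + s2 := by linarith
      set T : ℝ := B * r * s1 - B / 2 * r ^ 2 - (B * r * s2 - B / 2 * r ^ 2) - B * r * e with hT_def
      set E : ℝ := e * (s2 - s1) + u ^ 2 with hE_def
      have hkey : T * (s1 + s2) = B * r * E := by
        rw [hT_def, hE_def]; linear_combination B * r * hss'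
      have hd1 : |s2 - s1| ≤ u := by
        rw [abs_le]; constructor <;> linarith
      have habs : |E| ≤ 2 * u ^ 2 := by
        rw [hE_def]
        have h5 : |e * (s2 - s1)| ≤ u ^ 2 := by
          rw [abs_mul]
          calc |e| * |s2 - s1| ≤ u * u := mul_le_mul heabs hd1 (abs_nonneg _) hh0
            _ = u ^ 2 := by ring
        calc |e * (s2 - s1) + u ^ 2| ≤ |e * (s2 - s1)| + |u ^ 2| := abs_add_le _ _
          _ ≤ u ^ 2 + u ^ 2 := by
              have : |u ^ 2| = u ^ 2 := abs_of_nonneg (by positivity)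
              linarith [h5]
          _ = 2 * u ^ 2 := by ring
      have hTa : |T| * (s1 + s2) = B * r * |E| := by
        rw [← abs_of_pos hsum, ← abs_mul, hkey, abs_mul, abs_of_pos (mul_pos hB hr)]
      have hstep : B * r * |E| ≤ 2 * B * u ^ 2 * (s1 + s2) := by
        have h6 : B * r * |E| ≤ B * r * (2 * u ^ 2) :=
          mul_le_mul_of_nonneg_left habs (by positivity)
        nlinarith [mul_nonneg (mul_nonneg hB.le (sq_nonneg u)) (by linarith : (0:ℝ) ≤ s1 + s2 - r)]
      have : |T| * (s1 + s2) ≤ 2 * B * u ^ 2 * (s1 + s2) := by rw [hTa]; exact hstep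
      exact le_of_mul_le_mul_right this hsum

lemma psi_key {B r : ℝ} (hB : 0 < B) (hr : 0 < r) {d : ℕ} (y : Ed d) :
    psi B r y = ⟪rho B r y, y⟫_ℝ - ‖rho B r y‖ ^ 2 / (2 * B) := by
  rw [inner_rho]
  have hrho : ‖rho B r y‖ = |B * r / max ‖y‖ r| * ‖y‖ := by
    rw [rho, norm_smul, Real.norm_eq_abs]
  rw [psi, real_inner_self_eq_norm_sq, hrho]
  by_cases hy : ‖y‖ ≤ r
  · rw [if_pos hy, max_eq_right hy, abs_of_pos (by positivity)]
    have hBr : B * r / r = B := by field_simp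
    rw [hBr]
    field_simp [hB.ne']
    ring
  · push_neg at hy
    have hs0 : (0:ℝ) < ‖y‖ := lt_trans hr hy
    rw [if_neg (not_le.mpr hy), max_eq_left hy.le, abs_of_pos (by positivity)]
    field_simp [hB.ne', hs0.ne']

lemma psi_lip {B r : ℝ} (hB : 0 < B) (hr : 0 < r) {d : ℕ} (y z : Ed d) :
    |psi B r y - psi B r z| ≤ B * r * ‖y - z‖ := by
  have key : ∀ w w' : Ed d, ‖w‖ ≤ ‖w'‖ → psi B r w ≤ psi B r w' ∧
      psi B r w' - psi B r w ≤ B * r * (‖w'‖ - ‖w‖) := by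
    intro w w' hle
    have h0 : (0:ℝ) ≤ ‖w‖ := norm_nonneg _
    rw [psi, psi]
    by_cases h1 : ‖w'‖ ≤ r
    · rw [if_pos h1, if_pos (hle.trans h1)]
      have e2 : (0:ℝ) ≤ ‖w'‖ - ‖w‖ := by linarith
      have e1 : ‖w'‖ + ‖w‖ ≤ 2 * r := by linarith [hle.trans h1]
      have e3 : (‖w'‖ + ‖w‖) * (‖w'‖ - ‖w‖) ≤ 2 * r * (‖w'‖ - ‖w‖) :=
        mul_le_mul_of_nonneg_right e1 e2
      have e4 := mul_le_mul_of_nonneg_left e3 (by positivity : (0:ℝ) ≤ B / 2)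
      constructor
      · nlinarith [mul_nonneg (by positivity : (0:ℝ) ≤ B / 2)
          (mul_nonneg (add_nonneg (norm_nonneg w') h0) e2)]
      · nlinarith [e4]
    · push_neg at h1
      rw [if_neg (not_le.mpr h1)]
      by_cases h2 : ‖w‖ ≤ r
      · rw [if_pos h2]
        have e1 : B * r * r ≤ B * r * ‖w'‖ := mul_le_mul_of_nonneg_left h1.le (by positivity)
        have e2 : B / 2 * ‖w‖ ^ 2 ≤ B / 2 * r ^ 2 := by
          nlinarith [mul_le_mul_of_nonneg_left (mul_le_mul h2 h2 h0 hr.le)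
            (by positivity : (0:ℝ) ≤ B / 2)]
        constructor
        · linarith
        · nlinarith [mul_nonneg hB.le (sq_nonneg (r - ‖w‖)),
            mul_le_mul_of_nonneg_left hle (by positivity : (0:ℝ) ≤ B * r)]
      · push_neg at h2
        rw [if_neg (not_le.mpr h2)]
        constructor
        · nlinarith [mul_le_mul_of_nonneg_left hle (by positivity : (0:ℝ) ≤ B * r)]
        · exact le_of_eq (by ring)
  rcases le_total ‖y‖ ‖z‖ with hle | hle
  · obtain ⟨h1, h2⟩ := key y z hle
    have h3 : ‖z‖ - ‖y‖ ≤ ‖y - z‖ := by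
      have := abs_norm_sub_norm_le y z
      rw [abs_le] at this; linarith [this.1]
    rw [abs_le]
    constructor
    · have : B * r * (‖z‖ - ‖y‖) ≤ B * r * ‖y - z‖ :=
        mul_le_mul_of_nonneg_left h3 (by positivity)
      linarith
    · nlinarith [mul_nonneg (by positivity : (0:ℝ) ≤ B * r) (norm_nonneg (y - z))]
  · obtain ⟨h1, h2⟩ := key z y hle
    have h3 : ‖y‖ - ‖z‖ ≤ ‖y - z‖ := by
      have := abs_norm_sub_norm_le y z
      rw [abs_le] at this; linarith [this.2]
    rw [abs_le]
    constructor
    · nlinarith [mul_nonneg (by positivity : (0:ℝ) ≤ B * r) (norm_nonneg (y - z))]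
    · have : B * r * (‖y‖ - ‖z‖) ≤ B * r * ‖y - z‖ :=
        mul_le_mul_of_nonneg_left h3 (by positivity)
      linarith

lemma hasFDerivAt_of_sq_bound {E : Type*} [NormedAddCommGroup E] [NormedSpace ℝ E]
    {f : E → ℝ} {L : E →L[ℝ] ℝ} {x : E} {c : ℝ} (hc : 0 < c)
    (hb : ∀ h : E, |f (x + h) - f x - L h| ≤ c * ‖h‖ ^ 2) : HasFDerivAt f L x := by
  rw [hasFDerivAt_iff_isLittleO_nhds_zero, Asymptotics.isLittleO_iff]
  intro ε hε
  filter_upwards [Metric.ball_mem_nhds (0:E) (show 0 < ε / c by positivity)] with z hz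
  have hz' : ‖z‖ < ε / c := by simpa [dist_zero_right] using hz
  have h1 : ‖f (x + z) - f x - L z‖ ≤ c * ‖z‖ ^ 2 := by
    simpa [Real.norm_eq_abs] using hb z
  have h2 : c * ‖z‖ < ε := by
    have := (lt_div_iff₀' hc).1 hz'
    linarith [this]
  calc ‖f (x + z) - f x - L z‖ ≤ c * ‖z‖ ^ 2 := h1
    _ ≤ ε * ‖z‖ := by nlinarith [norm_nonneg z, h2]

lemma hasGradientAt_v {B r : ℝ} (hB : 0 < B) (hr : 0 < r) {d : ℕ} (c : ℝ) (q₀ p₀ : Ed d)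
    (x : Ed d) :
    HasGradientAt (fun z => c + ⟪p₀, z - q₀⟫_ℝ + psi B r (z - q₀))
      (p₀ + rho B r (x - q₀)) x := by
  rw [hasGradientAt_iff_hasFDerivAt]
  apply hasFDerivAt_of_sq_bound (c := 2 * B) (by positivity)
  intro h
  have harg : x + h - q₀ = (x - q₀) + h := by abel
  have hlin : ⟪p₀, (x - q₀) + h⟫_ℝ = ⟪p₀, x - q₀⟫_ℝ + ⟪p₀, h⟫_ℝ := inner_add_right _ _ _
  have hdual : (InnerProductSpace.toDual ℝ (Ed d)) (p₀ + rho B r (x - q₀)) h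
      = ⟪p₀, h⟫_ℝ + ⟪rho B r (x - q₀), h⟫_ℝ := by
    rw [InnerProductSpace.toDual_apply_apply, inner_add_left]
  have hsimp : c + ⟪p₀, x + h - q₀⟫_ℝ + psi B r (x + h - q₀)
      - (c + ⟪p₀, x - q₀⟫_ℝ + psi B r (x - q₀))
      - (InnerProductSpace.toDual ℝ (Ed d)) (p₀ + rho B r (x - q₀)) h
      = psi B r ((x - q₀) + h) - psi B r (x - q₀) - ⟪rho B r (x - q₀), h⟫_ℝ := by
    rw [harg, hlin, hdual]; ring
  rw [hsimp]
  exact psi_err hB hr (x - q₀) h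

lemma clarke_v {B r : ℝ} (hB : 0 < B) (hr : 0 < r) {d : ℕ} (c : ℝ) (q₀ p₀ : Ed d)
    (x : Ed d) {p : Ed d}
    (hp : p ∈ clarke (fun z => c + ⟪p₀, z - q₀⟫_ℝ + psi B r (z - q₀)) x) :
    p = p₀ + rho B r (x - q₀) := by
  have hsub : clarke (fun z => c + ⟪p₀, z - q₀⟫_ℝ + psi B r (z - q₀)) x
      ⊆ {p₀ + rho B r (x - q₀)} := by
    apply convexHull_min ?_ (convex_singleton _)
    rintro g ⟨qn, _, hqn, hgrad⟩
    have hgn : ∀ n, gradient (fun z => c + ⟪p₀, z - q₀⟫_ℝ + psi B r (z - q₀)) (qn n)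
        = p₀ + rho B r (qn n - q₀) :=
      fun n => (hasGradientAt_v hB hr c q₀ p₀ (qn n)).gradient
    have hgrad' : Tendsto (fun n => p₀ + rho B r (qn n - q₀)) atTop (𝓝 g) := by
      have : (fun n => gradient (fun z => c + ⟪p₀, z - q₀⟫_ℝ + psi B r (z - q₀)) (qn n))
          = fun n => p₀ + rho B r (qn n - q₀) := funext hgn
      rwa [this] at hgrad
    have hlim : Tendsto (fun n => p₀ + rho B r (qn n - q₀)) atTop
        (𝓝 (p₀ + rho B r (x - q₀))) := by
      exact tendsto_const_nhds.add (((rho_cont hr).tendsto _).comp (hqn.sub_const q₀))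
    exact tendsto_nhds_unique hgrad' hlim
  exact hsub hp

lemma concave_le_of_hasFDerivAt {E : Type*} [NormedAddCommGroup E] [NormedSpace ℝ E]
    {f : E → ℝ} (hf : ConcaveOn ℝ Set.univ f) {x : E} {L : E →L[ℝ] ℝ}
    (hL : HasFDerivAt f L x) (y : E) : f y ≤ f x + L (y - x) := by
  set φ : ℝ → ℝ := fun s => f (x + s • (y - x)) with hφdef
  have hline : HasDerivAt (fun s : ℝ => x + s • (y - x)) (y - x) 0 := by
    simpa using ((hasDerivAt_id (0:ℝ)).smul_const (y - x)).const_add x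
  have hφ : HasDerivAt φ (L (y - x)) 0 := by
    have hL' : HasFDerivAt f L (x + (0:ℝ) • (y - x)) := by simpa using hL
    simpa [hφdef, Function.comp_def] using hL'.comp_hasDerivAt 0 hline
  have slope_ineq : ∀ s ∈ Ioc (0:ℝ) 1, f y - f x ≤ slope φ 0 s := by
    intro s hs
    rw [slope_def_field]
    have hcomb := hf.2 (mem_univ y) (mem_univ x) hs.1.le
      (by linarith [hs.2] : (0:ℝ) ≤ 1 - s) (by ring)
    have harg : s • y + (1 - s) • x = x + s • (y - x) := by
      rw [sub_smul, one_smul, smul_sub]; abel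
    rw [harg] at hcomb
    have hφ0 : φ 0 = f x := by simp [hφdef]
    rw [hφ0, sub_zero, le_div_iff₀ hs.1]
    simp only [smul_eq_mul] at hcomb
    nlinarith [hcomb]
  have htend : Tendsto (slope φ 0) (𝓝[>] 0) (𝓝 (L (y - x))) :=
    (hasDerivAt_iff_tendsto_slope.1 hφ).mono_left
      (nhdsWithin_mono 0 (fun s hs => Set.mem_compl_singleton_iff.mpr (ne_of_gt hs)))
  have hfin : f y - f x ≤ L (y - x) :=
    ge_of_tendsto htend (Filter.eventually_of_mem (Ioc_mem_nhdsGT one_pos) slope_ineq)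
  linarith

lemma clarke_superdiff {d : ℕ} {u₀ : Ed d → ℝ} (hu : Continuous u₀) {B : ℝ}
    (hsc : ConcaveOn ℝ Set.univ (fun q => u₀ q - B / 2 * ‖q‖ ^ 2))
    {q₀ p₀ : Ed d} (hp₀ : p₀ ∈ clarke u₀ q₀) (y : Ed d) :
    u₀ y ≤ u₀ q₀ + ⟪p₀, y - q₀⟫_ℝ + B / 2 * ‖y - q₀‖ ^ 2 := by
  have step : ∀ x : Ed d, DifferentiableAt ℝ u₀ x → ∀ y : Ed d,
      u₀ y ≤ u₀ x + ⟪gradient u₀ x, y - x⟫_ℝ + B / 2 * ‖y - x‖ ^ 2 := by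
    intro x hx y
    have hfd : HasFDerivAt u₀ (toDual ℝ (Ed d) (gradient u₀ x)) x :=
      hasGradientAt_iff_hasFDerivAt.1 hx.hasGradientAt
    have hsq : HasFDerivAt (fun q : Ed d => B / 2 * ‖q‖ ^ 2)
        ((B / 2) • (2 • (innerSL ℝ x))) x :=
      ((hasStrictFDerivAt_norm_sq x).hasFDerivAt).const_mul (B / 2)
    have hw := concave_le_of_hasFDerivAt hsc (hfd.sub hsq) y
    have h1 : (toDual ℝ (Ed d) (gradient u₀ x) - (B / 2) • (2 • (innerSL ℝ x))) (y - x)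
        = ⟪gradient u₀ x, y - x⟫_ℝ - B * ⟪x, y - x⟫_ℝ := by
      simp [ContinuousLinearMap.sub_apply, ContinuousLinearMap.smul_apply,
        InnerProductSpace.toDual_apply_apply, innerSL_apply_apply]
      try ring
    rw [h1] at hw
    have hn : ‖y - x‖ ^ 2 = ‖y‖ ^ 2 - 2 * ⟪x, y⟫_ℝ + ‖x‖ ^ 2 := by
      rw [norm_sub_sq_real, real_inner_comm]; try ring
    have hi : ⟪x, y - x⟫_ℝ = ⟪x, y⟫_ℝ - ‖x‖ ^ 2 := by
      rw [inner_sub_right, real_inner_self_eq_norm_sq]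
    have hi' : B * ⟪x, y - x⟫_ℝ = B * ⟪x, y⟫_ℝ - B * ‖x‖ ^ 2 := by rw [hi]; ring
    have hn' : B / 2 * ‖y - x‖ ^ 2 = B / 2 * ‖y‖ ^ 2 - B * ⟪x, y⟫_ℝ + B / 2 * ‖x‖ ^ 2 := by
      rw [hn]; ring
    linarith [hw]
  suffices hsub : clarke u₀ q₀ ⊆ {p | ∀ z, u₀ z ≤ u₀ q₀ + ⟪p, z - q₀⟫_ℝ + B / 2 * ‖z - q₀‖ ^ 2} by
    exact hsub hp₀ y
  apply convexHull_min
  · rintro p ⟨qn, hdiff, hqn, hgrad⟩ z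
    have hev : ∀ n, u₀ z ≤ u₀ (qn n) + ⟪gradient u₀ (qn n), z - qn n⟫_ℝ
        + B / 2 * ‖z - qn n‖ ^ 2 := fun n => step (qn n) (hdiff n) z
    have htend : Tendsto (fun n => u₀ (qn n) + ⟪gradient u₀ (qn n), z - qn n⟫_ℝ
        + B / 2 * ‖z - qn n‖ ^ 2) atTop
        (𝓝 (u₀ q₀ + ⟪p, z - q₀⟫_ℝ + B / 2 * ‖z - q₀‖ ^ 2)) := by
      have h1 : Tendsto (fun n => z - qn n) atTop (𝓝 (z - q₀)) :=
        tendsto_const_nhds.sub hqn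
      exact (((hu.continuousAt.tendsto.comp hqn).add (hgrad.inner h1)).add
        (((h1.norm.pow 2)).const_mul (B / 2)))
    exact ge_of_tendsto htend (Filter.Eventually.of_forall hev)
  · intro p1 h1 p2 h2 a b ha hb hab
    intro z
    have e1 := h1 z
    have e2 := h2 z
    simp only [Set.mem_setOf_eq] at *
    have hin : ⟪a • p1 + b • p2, z - q₀⟫_ℝ = a * ⟪p1, z - q₀⟫_ℝ + b * ⟪p2, z - q₀⟫_ℝ := by
      rw [inner_add_left, real_inner_smul_left, real_inner_smul_left]
    rw [hin]
    have hb' : b = 1 - a := by linarith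
    subst hb'
    nlinarith [mul_le_mul_of_nonneg_left e1 ha,
      mul_le_mul_of_nonneg_left e2 (by linarith : (0:ℝ) ≤ 1 - a)]

lemma taylor_bound {d : ℕ} {H : Ed d → ℝ} (hH : ContDiff ℝ 2 H) {C : ℝ}
    (hC : ∀ p, ‖iteratedFDeriv ℝ 2 H p‖ ≤ C) (p w : Ed d) :
    |H (p + w) - H p - ⟪gradient H p, w⟫_ℝ| ≤ C / 2 * ‖w‖ ^ 2 := by
  have hC0 : 0 ≤ C := le_trans (norm_nonneg _) (hC p)
  have hdiff : Differentiable ℝ H := hH.differentiable (by norm_num)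
  have hd1 : ContDiff ℝ 1 (fderiv ℝ H) := hH.fderiv_right (by norm_num)
  have hdd : ∀ z, ‖fderiv ℝ (fderiv ℝ H) z‖ ≤ C := by
    intro z
    refine ContinuousLinearMap.opNorm_le_bound _ hC0 (fun a => ?_)
    rw [mul_comm]
    refine ContinuousLinearMap.opNorm_le_bound _ (by positivity) (fun b => ?_)
    have h2 : fderiv ℝ (fderiv ℝ H) z a b = iteratedFDeriv ℝ 2 H z ![a, b] := by
      rw [iteratedFDeriv_two_apply]; simp
    rw [h2]
    calc ‖iteratedFDeriv ℝ 2 H z ![a, b]‖ ≤ ‖iteratedFDeriv ℝ 2 H z‖ * (‖a‖ * ‖b‖) := by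
          simpa [Fin.prod_univ_two, mul_assoc] using (iteratedFDeriv ℝ 2 H z).le_opNorm ![a, b]
      _ ≤ C * (‖a‖ * ‖b‖) := mul_le_mul_of_nonneg_right (hC z) (by positivity)
      _ = ‖a‖ * C * ‖b‖ := by ring
  have hlip : ∀ a b : Ed d, ‖fderiv ℝ H a - fderiv ℝ H b‖ ≤ C * ‖a - b‖ := by
    intro a b
    exact Convex.norm_image_sub_le_of_norm_fderiv_le
      (fun x _ => (hd1.differentiable one_ne_zero).differentiableAt)
      (fun x _ => hdd x) convex_univ (mem_univ b) (mem_univ a)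
  have hg : ∀ s : ℝ, HasDerivAt (fun s : ℝ => H (p + s • w)) (fderiv ℝ H (p + s • w) w) s := by
    intro s
    have hline : HasDerivAt (fun s : ℝ => p + s • w) w s := by
      simpa using ((hasDerivAt_id s).smul_const w).const_add p
    simpa [Function.comp_def] using (hdiff (p + s • w)).hasFDerivAt.comp_hasDerivAt s hline
  have hcont : Continuous fun s : ℝ => fderiv ℝ H (p + s • w) w := by
    have h1 : Continuous fun s : ℝ => p + s • w := by continuity
    exact (ContinuousLinearMap.apply ℝ ℝ w).continuous.comp
      ((hH.continuous_fderiv (by norm_num)).comp h1)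
  have hint : H (p + w) - H p = ∫ s in (0:ℝ)..1, fderiv ℝ H (p + s • w) w := by
    have h := intervalIntegral.integral_eq_sub_of_hasDerivAt (f := fun s : ℝ => H (p + s • w))
      (fun s _ => hg s) (hcont.intervalIntegrable 0 1)
    rw [h]; simp
  have hginner : ⟪gradient H p, w⟫_ℝ = fderiv ℝ H p w := by
    have h := (hasGradientAt_iff_hasFDerivAt.1 (hdiff p).hasGradientAt).fderiv
    rw [h, InnerProductSpace.toDual_apply_apply]
  have h2 : H (p + w) - H p - fderiv ℝ H p w
      = ∫ s in (0:ℝ)..1, (fderiv ℝ H (p + s • w) w - fderiv ℝ H p w) := by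
    rw [intervalIntegral.integral_sub (hcont.intervalIntegrable 0 1)
      (intervalIntegrable_const), intervalIntegral.integral_const, hint]
    simp
  have hbound : ∀ s ∈ Set.uIoc (0:ℝ) 1,
      ‖fderiv ℝ H (p + s • w) w - fderiv ℝ H p w‖ ≤ C * ‖w‖ ^ 2 * s := by
    intro s hs
    rw [Set.uIoc_of_le (by norm_num : (0:ℝ) ≤ 1)] at hs
    have h3 : ‖fderiv ℝ H (p + s • w) w - fderiv ℝ H p w‖
        ≤ ‖fderiv ℝ H (p + s • w) - fderiv ℝ H p‖ * ‖w‖ := by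
      rw [← ContinuousLinearMap.sub_apply]
      exact ContinuousLinearMap.le_opNorm _ _
    have h4 : ‖fderiv ℝ H (p + s • w) - fderiv ℝ H p‖ ≤ C * (s * ‖w‖) := by
      have := hlip (p + s • w) p
      simpa [norm_smul, abs_of_pos hs.1] using this
    nlinarith [norm_nonneg w, norm_nonneg (fderiv ℝ H (p + s • w) - fderiv ℝ H p), hs.1.le]
  have hnorm := intervalIntegral.norm_integral_le_abs_of_norm_le
    (f := fun s => fderiv ℝ H (p + s • w) w - fderiv ℝ H p w)
    (g := fun s => C * ‖w‖ ^ 2 * s) (a := 0) (b := 1) (μ := MeasureTheory.volume)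
    (MeasureTheory.ae_restrict_of_forall_mem measurableSet_uIoc hbound)
    ((continuous_const.mul continuous_id).intervalIntegrable 0 1)
  have hval : (∫ s in (0:ℝ)..1, C * ‖w‖ ^ 2 * s) = C / 2 * ‖w‖ ^ 2 := by
    rw [intervalIntegral.integral_const_mul, integral_id]
    ring
  rw [hginner, h2]
  calc |∫ s in (0:ℝ)..1, (fderiv ℝ H (p + s • w) w - fderiv ℝ H p w)|
      ≤ |∫ s in (0:ℝ)..1, C * ‖w‖ ^ 2 * s| := by
        simpa [Real.norm_eq_abs] using hnorm
    _ = C / 2 * ‖w‖ ^ 2 := by rw [hval, abs_of_nonneg (by positivity)]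


/-- For a variational operator `R` and a Lipschitz `B`-semiconcave initial
condition `u₀`, for `0 ≤ t ≤ 1/(BC)` the value `R^t u₀(q)` is the minimal section of the
wavefront. -/
theorem statement3 (d : ℕ) (H : Ed d → ℝ) (C : ℝ)
    (hH : ContDiff ℝ 2 H) (hC : ∀ p, ‖iteratedFDeriv ℝ 2 H p‖ ≤ C)
    (R : ℝ → (Ed d → ℝ) → Ed d → ℝ) (hR : IsVariationalOperator H R)
    (u₀ : Ed d → ℝ) (hLip : ∃ K, LipschitzWith K u₀) (B : ℝ) (hB : 0 < B)
    (hsc : ConcaveOn ℝ Set.univ (fun q => u₀ q - B / 2 * ‖q‖ ^ 2)) :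
    ∀ t : ℝ, 0 ≤ t → t ≤ 1 / (B * C) → ∀ q : Ed d,
      R t u₀ q = sInf {S | (t, q, S) ∈ wavefront H u₀} ∧
      R t u₀ q = sInf {S | ∃ q₀ p₀ : Ed d, p₀ ∈ clarke u₀ q₀ ∧
        q₀ + t • gradient H p₀ = q ∧
        S = u₀ q₀ + t * ((inner ℝ p₀ (gradient H p₀) : ℝ) - H p₀)} := by
  intro t ht0 ht1 q
  obtain ⟨K, hK⟩ := hLip
  have hC0 : 0 ≤ C := le_trans (norm_nonneg _) (hC 0)
  have htC : t * C ≤ 1 / B := by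
    rcases eq_or_lt_of_le hC0 with hC0' | hC0'
    · rw [← hC0', mul_zero]
      positivity
    · have := mul_le_mul_of_nonneg_right ht1 hC0'.le
      calc t * C ≤ 1 / (B * C) * C := this
        _ = 1 / B := by field_simp
  -- the key lower bound
  have key : ∀ q₀ p₀ : Ed d, p₀ ∈ clarke u₀ q₀ → q₀ + t • gradient H p₀ = q →
      R t u₀ q ≤ u₀ q₀ + t * (⟪p₀, gradient H p₀⟫_ℝ - H p₀) := by
    intro q₀ p₀ hp₀ hq
    have hrr : B * (2 * ((K : ℝ) + ‖p₀‖) / B + 1) = 2 * ((K : ℝ) + ‖p₀‖) + B := by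
      field_simp [hB.ne']
      try ring
    obtain ⟨r, hr, hBr⟩ : ∃ r : ℝ, 0 < r ∧ B * r = 2 * ((K : ℝ) + ‖p₀‖) + B :=
      ⟨2 * ((K : ℝ) + ‖p₀‖) / B + 1, by positivity, hrr⟩
    set v : Ed d → ℝ := fun z => u₀ q₀ + ⟪p₀, z - q₀⟫_ℝ + psi B r (z - q₀) with hv_def
    have hsuper := clarke_superdiff hK.continuous hsc hp₀
    have huv : ∀ z, u₀ z ≤ v z := by
      intro z
      simp only [hv_def]
      by_cases hz : ‖z - q₀‖ ≤ r
      · rw [psi, if_pos hz]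
        exact hsuper z
      · push_neg at hz
        rw [psi, if_neg (not_le.mpr hz)]
        have hKz : |u₀ z - u₀ q₀| ≤ (K : ℝ) * ‖z - q₀‖ := by
          have := hK.dist_le_mul z q₀
          rwa [Real.dist_eq, dist_eq_norm] at this
        have hip : |⟪p₀, z - q₀⟫_ℝ| ≤ ‖p₀‖ * ‖z - q₀‖ := abs_real_inner_le_norm _ _
        have h1 := (abs_le.1 hKz).2
        have h2 := (abs_le.1 hip).1
        have e1 : ((K : ℝ) + ‖p₀‖ + B) * r ≤ ((K : ℝ) + ‖p₀‖ + B) * ‖z - q₀‖ :=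
          mul_le_mul_of_nonneg_left hz.le (by positivity)
        have e2 : B / 2 * r ^ 2 = (2 * ((K : ℝ) + ‖p₀‖) + B) * r / 2 := by
          rw [← hBr]; ring
        have e3 : B * r * ‖z - q₀‖ = (2 * ((K : ℝ) + ‖p₀‖) + B) * ‖z - q₀‖ := by
          rw [hBr]
        rw [e3]
        linarith [h1, h2, e1, e2, mul_nonneg hB.le hr.le]
    have hvLip : ∃ K', LipschitzWith K' v := by
      refine ⟨⟨‖p₀‖ + B * r, by positivity⟩, LipschitzWith.of_dist_le_mul (fun a b => ?_)⟩
      have hinner : ⟪p₀, a - q₀⟫_ℝ - ⟪p₀, b - q₀⟫_ℝ = ⟪p₀, a - b⟫_ℝ := by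
        rw [← inner_sub_right]
        congr 1
        abel
      have hd : v a - v b = ⟪p₀, a - b⟫_ℝ + (psi B r (a - q₀) - psi B r (b - q₀)) := by
        rw [hv_def]
        linear_combination hinner
      have habd : (a - q₀) - (b - q₀) = a - b := by abel
      have hpl := psi_lip hB hr (a - q₀) (b - q₀)
      rw [habd] at hpl
      have hip : |⟪p₀, a - b⟫_ℝ| ≤ ‖p₀‖ * ‖a - b‖ := abs_real_inner_le_norm _ _
      rw [Real.dist_eq, dist_eq_norm]; change |v a - v b| ≤ (‖p₀‖ + B * r) * ‖a - b‖; rw [hd]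
      calc |⟪p₀, a - b⟫_ℝ + (psi B r (a - q₀) - psi B r (b - q₀))|
          ≤ |⟪p₀, a - b⟫_ℝ| + |psi B r (a - q₀) - psi B r (b - q₀)| := abs_add_le _ _
        _ ≤ ‖p₀‖ * ‖a - b‖ + B * r * ‖a - b‖ := add_le_add hip hpl
        _ = (‖p₀‖ + B * r) * ‖a - b‖ := by ring
    have hmono := hR.2.1 t ht0 u₀ v ⟨K, hK⟩ hvLip huv q
    obtain ⟨x, p₂, hp₂, hx, hval⟩ := hR.2.2.2 t ht0 v hvLip q
    rw [hv_def] at hp₂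
    have hp₂' : p₂ = p₀ + rho B r (x - q₀) := clarke_v hB hr (u₀ q₀) q₀ p₀ x hp₂
    have hΔeq : x - q₀ = t • gradient H p₀ - t • gradient H p₂ :=
      sub_eq_sub_iff_add_eq_add.mpr
        ((hq.trans hx).symm.trans (add_comm q₀ (t • gradient H p₀)))
    have hG2 : t • gradient H p₂ = t • gradient H p₀ - (x - q₀) := by
      rw [hΔeq]; abel
    have hpsi := psi_key hB hr (x - q₀)
    set w : Ed d := rho B r (x - q₀) with hw_def
    have htay := taylor_bound hH hC p₀ w
    have htay1 : H p₀ + ⟪gradient H p₀, w⟫_ℝ - C / 2 * ‖w‖ ^ 2 ≤ H (p₀ + w) := by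
      have := (abs_le.1 htay).1; linarith
    have hinner1 : t * ⟪p₂, gradient H p₂⟫_ℝ
        = t * ⟪p₀, gradient H p₀⟫_ℝ + t * ⟪gradient H p₀, w⟫_ℝ
          - ⟪p₀, x - q₀⟫_ℝ - ⟪w, x - q₀⟫_ℝ := by
      rw [← real_inner_smul_right, hG2, hp₂']
      rw [inner_sub_right, inner_add_left, inner_add_left, real_inner_smul_right,
        real_inner_smul_right, real_inner_comm w (gradient H p₀)]
      ring
    have hfin : v x + t * (⟪p₂, gradient H p₂⟫_ℝ - H p₂)
        ≤ u₀ q₀ + t * (⟪p₀, gradient H p₀⟫_ℝ - H p₀) := by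
      have hvx : v x = u₀ q₀ + ⟪p₀, x - q₀⟫_ℝ + psi B r (x - q₀) := by rw [hv_def]
      have hHp₂ : H p₂ = H (p₀ + w) := by rw [hp₂']
      rw [hvx, hpsi, mul_sub, hinner1, hHp₂]
      have m1 := mul_le_mul_of_nonneg_left htay1 ht0
      have m2 := mul_le_mul_of_nonneg_right htC (by positivity : (0:ℝ) ≤ ‖w‖ ^ 2 / 2)
      have e : ‖w‖ ^ 2 / (2 * B) = 1 / B * (‖w‖ ^ 2 / 2) := by
        rw [one_div, div_eq_mul_inv, div_eq_mul_inv, mul_inv]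
        ring
      rw [e]
      nlinarith [m1, m2]
    calc R t u₀ q ≤ R t v q := hmono
      _ = v x + t * (⟪p₂, gradient H p₂⟫_ℝ - H p₂) := hval
      _ ≤ u₀ q₀ + t * (⟪p₀, gradient H p₀⟫_ℝ - H p₀) := hfin
  obtain ⟨q₁, p₁, hp₁, hq₁, hval₁⟩ := hR.2.2.2 t ht0 u₀ ⟨K, hK⟩ q
  have hmem : R t u₀ q ∈ {S | ∃ q₀ p₀ : Ed d, p₀ ∈ clarke u₀ q₀ ∧
      q₀ + t • gradient H p₀ = q ∧
      S = u₀ q₀ + t * ((inner ℝ p₀ (gradient H p₀) : ℝ) - H p₀)} :=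
    ⟨q₁, p₁, hp₁, hq₁.symm, hval₁⟩
  have hlb : ∀ S ∈ {S | ∃ q₀ p₀ : Ed d, p₀ ∈ clarke u₀ q₀ ∧
      q₀ + t • gradient H p₀ = q ∧
      S = u₀ q₀ + t * ((inner ℝ p₀ (gradient H p₀) : ℝ) - H p₀)}, R t u₀ q ≤ S := by
    rintro S ⟨q₀', p₀', hp₀', hq', hS'⟩
    rw [hS']
    exact key q₀' p₀' hp₀' hq'
  have h2 : R t u₀ q = sInf {S | ∃ q₀ p₀ : Ed d, p₀ ∈ clarke u₀ q₀ ∧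
      q₀ + t • gradient H p₀ = q ∧
      S = u₀ q₀ + t * ((inner ℝ p₀ (gradient H p₀) : ℝ) - H p₀)} :=
    le_antisymm (le_csInf ⟨_, hmem⟩ hlb) (csInf_le ⟨R t u₀ q, hlb⟩ hmem)
  have hseteq : {S | (t, q, S) ∈ wavefront H u₀} = {S | ∃ q₀ p₀ : Ed d, p₀ ∈ clarke u₀ q₀ ∧
      q₀ + t • gradient H p₀ = q ∧
      S = u₀ q₀ + t * ((inner ℝ p₀ (gradient H p₀) : ℝ) - H p₀)} := by
    ext S
    simp only [wavefront, Set.mem_setOf_eq]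
    constructor
    · rintro ⟨t', q₀, p₀, ht', hp, heq⟩
      rw [Prod.mk.injEq] at heq
      obtain ⟨h1, heq2⟩ := heq
      subst h1
      rw [Prod.mk.injEq] at heq2
      obtain ⟨hA, hB'⟩ := heq2
      exact ⟨q₀, p₀, hp, hA.symm, hB'⟩
    · rintro ⟨q₀, p₀, hp, hqeq, hS⟩
      exact ⟨t, q₀, p₀, ht0, hp,
        by rw [Prod.mk.injEq, Prod.mk.injEq]; exact ⟨rfl, hqeq.symm, hS⟩⟩
  exact ⟨by rw [hseteq]; exact h2, h2⟩
end
end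

section
/- Let H : ℝ → ℝ be C² with |H''| ≤ C, let u₀ : ℝ → ℝ be C² with |u₀''| ≤ B, and let 0 < t < 1/(BC). Define x_t(q) = q + tH'(u₀'(q)) and y_t(q) = u₀(q) + t·u₀'(q)H'(u₀'(q)) − tH(u₀'(q)). Then: (1) for every q, x_t'(q) = 1 + t·u₀''(q)H''(u₀'(q)) > 0 and y_t'(q) = u₀'(q)·x_t'(q), so the curve q ↦ (x_t(q), y_t(q)) is the graph of a C¹ function whose slope at the point x_t(q) equals u₀'(q); (2) if u₀ is convex (respectively concave) on an interval I, then the function y_t ∘ x_t⁻¹ is convex (respectively concave) on x_t(I); (3) for the curve z(p) = tH'(p), w(p) = t(pH'(p) − H(p)), one has w'(p) = p·z'(p) for every p, so at any p with H''(p) ≠ 0 its slope equals p. -/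
open Filter Topology Set Function

noncomputable section

/-- Slopes and convexity of the parametrized pieces of the wavefront in
dimension one: `(x_t, y_t)` parametrizes the piece issued from the smooth part of the
initial condition and `(z, w)` the piece issued from a singularity. -/
theorem statement8 (H u₀ : ℝ → ℝ) (C B t : ℝ)
    (hH : ContDiff ℝ 2 H) (hC : ∀ p, |deriv (deriv H) p| ≤ C)
    (hu : ContDiff ℝ 2 u₀) (hB : ∀ q, |deriv (deriv u₀) q| ≤ B)
    (ht : 0 < t) (ht' : t < 1 / (B * C))
    (xt yt z w : ℝ → ℝ)
    (hxt : xt = fun q => q + t * deriv H (deriv u₀ q))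
    (hyt : yt = fun q => u₀ q + t * deriv u₀ q * deriv H (deriv u₀ q) - t * H (deriv u₀ q))
    (hz : z = fun p => t * deriv H p)
    (hw : w = fun p => t * (p * deriv H p - H p)) :
    -- (1) slopes on the piece issued from the smooth part
    (∀ q : ℝ,
      deriv xt q = 1 + t * deriv (deriv u₀) q * deriv (deriv H) (deriv u₀ q) ∧
      0 < deriv xt q ∧
      deriv yt q = deriv u₀ q * deriv xt q) ∧
    -- the curve `(x_t, y_t)` is the graph of a `C¹` function with slope `u₀'(q)` at `x_t(q)`
    (∃ ψ : ℝ → ℝ, ContDiff ℝ 1 ψ ∧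
      ∀ q : ℝ, ψ (xt q) = yt q ∧ deriv ψ (xt q) = deriv u₀ q) ∧
    -- (2) convexity of the piece issued from an interval where `u₀` is convex (resp. concave)
    (∀ I : Set ℝ,
      (ConvexOn ℝ I u₀ → ConvexOn ℝ (xt '' I) (yt ∘ Function.invFun xt)) ∧
      (ConcaveOn ℝ I u₀ → ConcaveOn ℝ (xt '' I) (yt ∘ Function.invFun xt))) ∧
    -- (3) slopes on the piece issued from a singularity
    (∀ p : ℝ, deriv w p = p * deriv z p) ∧
    (∀ p : ℝ, deriv (deriv H) p ≠ 0 → deriv w p / deriv z p = p) := by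
  have h2 : (2 : WithTop ℕ∞) = 1 + 1 := by norm_num
  have hu1 : ContDiff ℝ 1 (deriv u₀) := (contDiff_succ_iff_deriv.mp (h2 ▸ hu)).2.2
  have hH1 : ContDiff ℝ 1 (deriv H) := (contDiff_succ_iff_deriv.mp (h2 ▸ hH)).2.2
  have hdH : ∀ p, HasDerivAt H (deriv H p) p := fun p =>
    ((hH.differentiable (by norm_num)) p).hasDerivAt
  have hdH2 : ∀ p, HasDerivAt (deriv H) (deriv (deriv H) p) p := fun p =>
    ((hH1.differentiable one_ne_zero) p).hasDerivAt
  have hdu : ∀ q, HasDerivAt u₀ (deriv u₀ q) q := fun q =>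
    ((hu.differentiable (by norm_num)) q).hasDerivAt
  have hdu2 : ∀ q, HasDerivAt (deriv u₀) (deriv (deriv u₀) q) q := fun q =>
    ((hu1.differentiable one_ne_zero) q).hasDerivAt
  -- bound `t * B * C < 1`
  have hB0 : 0 ≤ B := le_trans (abs_nonneg _) (hB 0)
  have hC0 : 0 ≤ C := le_trans (abs_nonneg _) (hC 0)
  have hne : B * C ≠ 0 := by
    intro h; rw [h] at ht'; simp at ht'; linarith
  have hBC : 0 < B * C := lt_of_le_of_ne (mul_nonneg hB0 hC0) (Ne.symm hne)
  have htBC : t * (B * C) < 1 := (lt_div_iff₀ hBC).mp ht'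
  -- derivative of `xt`
  have hdxt : ∀ q, HasDerivAt xt
      (1 + t * deriv (deriv u₀) q * deriv (deriv H) (deriv u₀ q)) q := by
    intro q
    have h1 : HasDerivAt (fun q => deriv H (deriv u₀ q))
        (deriv (deriv H) (deriv u₀ q) * deriv (deriv u₀) q) q :=
      (hdH2 (deriv u₀ q)).comp q (hdu2 q)
    have := (hasDerivAt_id q).add (h1.const_mul t)
    rw [hxt]
    exact this.congr_deriv (by ring)
  -- key bound
  have habs : ∀ q, |t * deriv (deriv u₀) q * deriv (deriv H) (deriv u₀ q)| ≤ t * (B * C) := by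
    intro q
    rw [abs_mul, abs_mul, abs_of_pos ht, mul_assoc]
    exact mul_le_mul_of_nonneg_left
      (mul_le_mul (hB q) (hC _) (abs_nonneg _) hB0) ht.le
  have hpos : ∀ q, 0 < 1 + t * deriv (deriv u₀) q * deriv (deriv H) (deriv u₀ q) := by
    intro q
    have h1 := habs q
    have h2 := neg_abs_le (t * deriv (deriv u₀) q * deriv (deriv H) (deriv u₀ q))
    linarith
  have hxtpos : ∀ q, 0 < deriv xt q := fun q => by
    rw [(hdxt q).deriv]; exact hpos q
  -- derivative of `yt`
  have hdyt : ∀ q, HasDerivAt yt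
      (deriv u₀ q * (1 + t * deriv (deriv u₀) q * deriv (deriv H) (deriv u₀ q))) q := by
    intro q
    have h1 : HasDerivAt (fun q => deriv H (deriv u₀ q))
        (deriv (deriv H) (deriv u₀ q) * deriv (deriv u₀) q) q :=
      (hdH2 (deriv u₀ q)).comp q (hdu2 q)
    have hb : HasDerivAt (fun q => t * deriv u₀ q * deriv H (deriv u₀ q))
        ((t * deriv (deriv u₀) q) * deriv H (deriv u₀ q)
          + (t * deriv u₀ q) * (deriv (deriv H) (deriv u₀ q) * deriv (deriv u₀) q)) q :=
      ((hdu2 q).const_mul t).mul h1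
    have hc : HasDerivAt (fun q => t * H (deriv u₀ q))
        (t * (deriv H (deriv u₀ q) * deriv (deriv u₀) q)) q :=
      (((hdH (deriv u₀ q)).comp q (hdu2 q))).const_mul t
    have := ((hdu q).add hb).sub hc
    rw [hyt]
    exact this.congr_deriv (by ring)
  -- part (1)
  have part1 : ∀ q : ℝ,
      deriv xt q = 1 + t * deriv (deriv u₀) q * deriv (deriv H) (deriv u₀ q) ∧
      0 < deriv xt q ∧
      deriv yt q = deriv u₀ q * deriv xt q := by
    intro q
    refine ⟨(hdxt q).deriv, hxtpos q, ?_⟩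
    rw [(hdyt q).deriv, (hdxt q).deriv]
  -- monotonicity and surjectivity of `xt`
  have hmono : StrictMono xt := strictMono_of_deriv_pos hxtpos
  have hxdiff : Differentiable ℝ xt := fun q => (hdxt q).differentiableAt
  set ε := 1 - t * (B * C) with hεdef
  have hε : 0 < ε := by simp [hεdef]; linarith
  have hlow : ∀ q, ε ≤ deriv xt q := by
    intro q
    rw [(hdxt q).deriv]
    have h1 := habs q
    have h2 := neg_abs_le (t * deriv (deriv u₀) q * deriv (deriv H) (deriv u₀ q))
    simp [hεdef]; linarith
  have hmono2 : Monotone (fun q => xt q - ε * q) := by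
    apply monotone_of_deriv_nonneg (hxdiff.sub ((differentiable_id).const_mul ε))
    intro q
    have := ((hdxt q).sub ((hasDerivAt_id q).const_mul ε)).deriv
    rw [this]
    have := hlow q
    rw [(hdxt q).deriv] at this
    simp only [mul_one]
    linarith
  have hsurj : Function.Surjective xt := by
    apply Continuous.surjective hxdiff.continuous
    · apply tendsto_atTop_mono' atTop (f₁ := fun q => (xt 0 + ε * q))
      · filter_upwards [eventually_ge_atTop (0 : ℝ)] with q hq
        have := hmono2 hq
        simp only [mul_zero, sub_zero] at this
        linarith
      · exact tendsto_atTop_add_const_left atTop _ (tendsto_const_mul_atTop_of_pos hε |>.mpr tendsto_id)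
    · apply tendsto_atBot_mono' atBot (f₁ := fun q => (xt 0 + ε * q))
      · filter_upwards [eventually_le_atBot (0 : ℝ)] with q hq
        have := hmono2 hq
        simp only [mul_zero, sub_zero] at this
        linarith
      · exact tendsto_atBot_add_const_left atBot _ ((tendsto_const_mul_atBot_of_pos hε).mpr tendsto_id)
  -- the inverse function
  set g := Function.invFun xt with hgdef
  have hgx : ∀ q, g (xt q) = q := fun q => leftInverse_invFun hmono.injective q
  have hxg : ∀ x, xt (g x) = x := fun x => rightInverse_invFun hsurj x
  have hgeq : g = ⇑(StrictMono.orderIsoOfSurjective xt hmono hsurj).symm := by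
    funext x
    apply hmono.injective
    rw [hxg]
    exact (StrictMono.orderIsoOfSurjective_self_symm_apply xt hmono hsurj x).symm
  have hgcont : Continuous g := by
    rw [hgeq]; exact OrderIso.continuous _
  have hgmono : Monotone g := by
    rw [hgeq]; exact (StrictMono.orderIsoOfSurjective xt hmono hsurj).symm.monotone
  have hgd : ∀ q, HasDerivAt g (deriv xt q)⁻¹ (xt q) := by
    intro q
    apply HasDerivAt.of_local_left_inverse hgcont.continuousAt
    · rw [hgx q]; exact (hdxt q).deriv ▸ hdxt q
    · exact (hxtpos q).ne'
    · exact Filter.Eventually.of_forall hxg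
  -- the function ψ
  set ψ := yt ∘ g with hψdef
  have hψd : ∀ q, HasDerivAt ψ (deriv u₀ q) (xt q) := by
    intro q
    have hcomp : HasDerivAt ψ
        ((deriv u₀ q * (1 + t * deriv (deriv u₀) q * deriv (deriv H) (deriv u₀ q)))
          * (deriv xt q)⁻¹) (xt q) := by
      apply HasDerivAt.comp
      · rw [hgx q]; exact hdyt q
      · exact hgd q
    convert hcomp using 1
    rw [(hdxt q).deriv, mul_assoc, mul_inv_cancel₀ (hpos q).ne', mul_one]
  have hψdiff : Differentiable ℝ ψ := fun x => by
    obtain ⟨q, rfl⟩ := hsurj x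
    exact (hψd q).differentiableAt
  have hψderiv : ∀ x, deriv ψ x = deriv u₀ (g x) := by
    intro x
    obtain ⟨q, rfl⟩ := hsurj x
    rw [(hψd q).deriv, hgx]
  have hψ1 : ContDiff ℝ 1 ψ := by
    rw [contDiff_one_iff_deriv]
    refine ⟨hψdiff, ?_⟩
    have : deriv ψ = fun x => deriv u₀ (g x) := funext hψderiv
    rw [this]
    exact (hu1.continuous.comp hgcont)
  have part2 : ∃ ψ' : ℝ → ℝ, ContDiff ℝ 1 ψ' ∧
      ∀ q : ℝ, ψ' (xt q) = yt q ∧ deriv ψ' (xt q) = deriv u₀ q := by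
    refine ⟨ψ, hψ1, fun q => ⟨?_, (hψd q).deriv⟩⟩
    simp [hψdef, hgx q]
  -- part (2)
  have part3 : ∀ I : Set ℝ,
      (ConvexOn ℝ I u₀ → ConvexOn ℝ (xt '' I) (yt ∘ Function.invFun xt)) ∧
      (ConcaveOn ℝ I u₀ → ConcaveOn ℝ (xt '' I) (yt ∘ Function.invFun xt)) := by
    intro I
    have himg : ∀ hI : Convex ℝ I, Convex ℝ (xt '' I) := by
      intro hI
      rw [convex_iff_ordConnected] at hI ⊢
      constructor
      rintro x ⟨a, ha, rfl⟩ y ⟨b, hb, rfl⟩ s hs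
      refine ⟨g s, ?_, hxg s⟩
      have h1 : a ≤ g s := by rw [← hgx a]; exact hgmono hs.1
      have h2 : g s ≤ b := by rw [← hgx b]; exact hgmono hs.2
      exact hI.out ha hb ⟨h1, h2⟩
    have hmaps : ∀ x ∈ xt '' I, g x ∈ I := by
      rintro x ⟨q, hq, rfl⟩
      rw [hgx]; exact hq
    constructor
    · intro hconv
      have hd : MonotoneOn (deriv u₀) I :=
        hconv.monotoneOn_deriv (fun x _ => (hdu x).differentiableAt)
      have hψmono : MonotoneOn (deriv ψ) (xt '' I) := by
        intro x hx y hy hxy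
        rw [hψderiv, hψderiv]
        exact hd (hmaps x hx) (hmaps y hy) (hgmono hxy)
      exact MonotoneOn.convexOn_of_deriv (himg hconv.1) hψdiff.continuous.continuousOn
        hψdiff.differentiableOn (hψmono.mono interior_subset)
    · intro hconc
      have hd : AntitoneOn (deriv u₀) I :=
        hconc.antitoneOn_deriv (fun x _ => (hdu x).differentiableAt)
      have hψanti : AntitoneOn (deriv ψ) (xt '' I) := by
        intro x hx y hy hxy
        rw [hψderiv, hψderiv]
        exact hd (hmaps x hx) (hmaps y hy) (hgmono hxy)
      exact AntitoneOn.concaveOn_of_deriv (himg hconc.1) hψdiff.continuous.continuousOn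
        hψdiff.differentiableOn (hψanti.mono interior_subset)
  -- part (3)
  have hdz : ∀ p, HasDerivAt z (t * deriv (deriv H) p) p := by
    intro p; rw [hz]; exact (hdH2 p).const_mul t
  have hdw : ∀ p, HasDerivAt w (t * (p * deriv (deriv H) p)) p := by
    intro p
    have h1 : HasDerivAt (fun p => p * deriv H p - H p)
        ((1 * deriv H p + p * deriv (deriv H) p) - deriv H p) p :=
      ((hasDerivAt_id p).mul (hdH2 p)).sub (hdH p)
    have := h1.const_mul t
    rw [hw]
    exact this.congr_deriv (by ring)
  refine ⟨part1, part2, part3, fun p => ?_, fun p hp => ?_⟩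
  · rw [(hdw p).deriv, (hdz p).deriv]; ring
  · rw [(hdw p).deriv, (hdz p).deriv]
    have hne : t * deriv (deriv H) p ≠ 0 := mul_ne_zero ht.ne' hp
    field_simp
end
end

section
/- Let H : ℝ → ℝ be a C² Hamiltonian, let U be an open neighborhood of a point (t,q) in (0,∞) × ℝ, let f₁, f₂ : U → ℝ be C¹ functions satisfying ∂ₜf_i + H(∂_q f_i) = 0 on U for i = 1,2, and set u = min(f₁, f₂) on U. Assume f₁(t,q) = f₂(t,q) and set p₁ = ∂_q f₁(t,q), p₂ = ∂_q f₂(t,q). Then u is a viscosity solution at (t,q) if and only if the Oleinik entropy condition is satisfied between p₁ and p₂, i.e. H(μp₁ + (1−μ)p₂) ≤ μH(p₁) + (1−μ)H(p₂) for all μ ∈ (0,1). -/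
open Filter Topology Set

noncomputable section

set_option maxHeartbeats 4000000


lemma aux_slice_t {f : ℝ × ℝ → ℝ} {L : ℝ × ℝ →L[ℝ] ℝ} {t q : ℝ}
    (h : HasFDerivAt f L (t, q)) :
    HasDerivAt (fun s => f (s, q)) (L (1, 0)) t :=
  h.comp_hasDerivAt t ((hasDerivAt_id t).prodMk (hasDerivAt_const t q))

lemma aux_slice_q {f : ℝ × ℝ → ℝ} {L : ℝ × ℝ →L[ℝ] ℝ} {t q : ℝ}
    (h : HasFDerivAt f L (t, q)) :
    HasDerivAt (fun y => f (t, y)) (L (0, 1)) q :=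
  h.comp_hasDerivAt q ((hasDerivAt_const q t).prodMk (hasDerivAt_id q))

lemma aux_dir {f : ℝ × ℝ → ℝ} {L : ℝ × ℝ →L[ℝ] ℝ} {t q : ℝ}
    (h : HasFDerivAt f L (t, q)) (w : ℝ × ℝ) :
    HasDerivAt (fun s : ℝ => f (t + s * w.1, q + s * w.2)) (L w) 0 := by
  have h1 : HasDerivAt (fun s : ℝ => t + s * w.1) w.1 0 := by
    exact ((hasDerivAt_const (0:ℝ) t).add ((hasDerivAt_id (0:ℝ)).mul_const w.1)).congr_deriv (by simp)
  have h2 : HasDerivAt (fun s : ℝ => q + s * w.2) w.2 0 := by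
    exact ((hasDerivAt_const (0:ℝ) q).add ((hasDerivAt_id (0:ℝ)).mul_const w.2)).congr_deriv (by simp)
  have hz : HasDerivAt (fun s : ℝ => (t + s * w.1, q + s * w.2)) ((w.1 : ℝ), (w.2 : ℝ)) 0 :=
    h1.prodMk h2
  have h' : HasFDerivAt f L (t + 0 * w.1, q + 0 * w.2) := by
    rw [show ((t + 0 * w.1 : ℝ), (q + 0 * w.2 : ℝ)) = (t, q) by norm_num]
    exact h
  exact h'.comp_hasDerivAt 0 hz

lemma aux_pos_near {g : ℝ → ℝ} (h0 : g 0 = 0) {d : ℝ}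
    (hd : HasDerivAt g d 0) (hpos : 0 < d) :
    ∀ᶠ h in 𝓝[>] (0:ℝ), 0 < g h := by
  rw [hasDerivAt_iff_tendsto_slope] at hd
  have h1 : ∀ᶠ h in 𝓝[≠] (0:ℝ), 0 < slope g 0 h := hd.eventually (eventually_gt_nhds hpos)
  have h2 : 𝓝[>] (0:ℝ) ≤ 𝓝[≠] (0:ℝ) := nhdsWithin_mono _ (fun x hx => ne_of_gt hx)
  filter_upwards [h1.filter_mono h2, self_mem_nhdsWithin] with h hg hh
  have hs : slope g 0 h = g h / h := by rw [slope_def_field]; simp [h0]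
  rw [hs] at hg
  rcases div_pos_iff.mp hg with ⟨h4, _⟩ | ⟨_, h5⟩
  · exact h4
  · exact absurd hh (by simp; linarith)

lemma aux_ext {U : Set (ℝ × ℝ)} (hU : IsOpen U) {x₀ : ℝ × ℝ} (hx : x₀ ∈ U)
    {g : ℝ × ℝ → ℝ} (hg : ContDiffOn ℝ 1 g U) :
    ∃ φ : ℝ × ℝ → ℝ, ContDiff ℝ 1 φ ∧ φ =ᶠ[𝓝 x₀] g := by
  obtain ⟨ε, hε, hball⟩ := Metric.isOpen_iff.mp hU x₀ hx
  set χ : ContDiffBump x₀ := ⟨ε/2, 3*ε/4, by positivity, by linarith⟩ with hχ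
  set φ : ℝ × ℝ → ℝ := U.indicator (fun x => χ x * g x) with hφ
  have hts : tsupport (χ : ℝ × ℝ → ℝ) ⊆ U := by
    rw [χ.tsupport_eq]
    exact (Metric.closedBall_subset_ball (by simp [hχ]; linarith)).trans hball
  refine ⟨φ, ?_, ?_⟩
  · rw [contDiff_iff_contDiffAt]
    intro x
    by_cases hxU : x ∈ U
    · have hnb : U ∈ 𝓝 x := hU.mem_nhds hxU
      have h1 : ContDiffAt ℝ 1 (fun x => χ x * g x) x :=
        (χ.contDiff.contDiffAt).mul (hg.contDiffAt hnb)
      exact h1.congr_of_eventuallyEq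
        (eventually_of_mem hnb fun y hy => Set.indicator_of_mem hy _)
    · have hx' : x ∉ tsupport (χ : ℝ × ℝ → ℝ) := fun h => hxU (hts h)
      have hnb : (tsupport (χ : ℝ × ℝ → ℝ))ᶜ ∈ 𝓝 x :=
        (isClosed_tsupport _).isOpen_compl.mem_nhds hx'
      have h0 : ∀ᶠ y in 𝓝 x, φ y = 0 := by
        refine eventually_of_mem hnb (fun y hy => ?_)
        by_cases hyU : y ∈ U
        · simp [hφ, Set.indicator_of_mem hyU, image_eq_zero_of_notMem_tsupport hy]
        · simp [hφ, Set.indicator_of_notMem hyU]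
      exact (contDiffAt_const (c := (0:ℝ))).congr_of_eventuallyEq h0
  · have hnb : Metric.ball x₀ (ε/2) ∈ 𝓝 x₀ := Metric.ball_mem_nhds _ (by positivity)
    refine eventually_of_mem hnb fun y hy => ?_
    have hyU : y ∈ U := hball (Metric.ball_subset_ball (by linarith) hy)
    have h1 : χ y = 1 := χ.one_of_mem_closedBall (by
      simpa [hχ] using Metric.ball_subset_closedBall hy)
    simp [hφ, Set.indicator_of_mem hyU, h1]

lemma lin_expand (L : ℝ × ℝ →L[ℝ] ℝ) (w : ℝ × ℝ) :
    L w = w.1 * L (1, 0) + w.2 * L (0, 1) := by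
  have hw : w = w.1 • ((1:ℝ), (0:ℝ)) + w.2 • ((0:ℝ), (1:ℝ)) := by
    simp [Prod.ext_iff]
  conv_lhs => rw [hw]
  rw [map_add, map_smul, map_smul, smul_eq_mul, smul_eq_mul]

/-- (Oleinik's entropy criterion.) If `u = min(f₁,f₂)` near `(t,q)` with
`f₁, f₂` two `C¹` solutions of `∂ₜf + H(∂_q f) = 0` agreeing at `(t,q)`, then `u` is a
viscosity solution at `(t,q)` if and only if the entropy condition is satisfied between
`p₁ = ∂_q f₁(t,q)` and `p₂ = ∂_q f₂(t,q)`. -/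
theorem statement9 (H : ℝ → ℝ) (hH : ContDiff ℝ 2 H)
    (U : Set (ℝ × ℝ)) (hUopen : IsOpen U) (hU : U ⊆ Set.Ioi 0 ×ˢ Set.univ)
    (t q : ℝ) (htq : (t, q) ∈ U)
    (f₁ f₂ : ℝ × ℝ → ℝ)
    (hf₁ : ContDiffOn ℝ 1 f₁ U) (hf₂ : ContDiffOn ℝ 1 f₂ U)
    (hpde₁ : ∀ x ∈ U,
      deriv (fun s => f₁ (s, x.2)) x.1 + H (deriv (fun y => f₁ (x.1, y)) x.2) = 0)
    (hpde₂ : ∀ x ∈ U,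
      deriv (fun s => f₂ (s, x.2)) x.1 + H (deriv (fun y => f₂ (x.1, y)) x.2) = 0)
    (heq : f₁ (t, q) = f₂ (t, q))
    (p₁ p₂ : ℝ)
    (hp₁ : p₁ = deriv (fun y => f₁ (t, y)) q)
    (hp₂ : p₂ = deriv (fun y => f₂ (t, y)) q) :
    ((∀ φ : ℝ × ℝ → ℝ, ContDiff ℝ 1 φ →
        IsLocalMax (fun y => min (f₁ y) (f₂ y) - φ y) (t, q) →
        deriv (fun s => φ (s, q)) t + H (deriv (fun y => φ (t, y)) q) ≤ 0) ∧
     (∀ φ : ℝ × ℝ → ℝ, ContDiff ℝ 1 φ →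
        IsLocalMin (fun y => min (f₁ y) (f₂ y) - φ y) (t, q) →
        deriv (fun s => φ (s, q)) t + H (deriv (fun y => φ (t, y)) q) ≥ 0))
    ↔ (∀ μ ∈ Set.Ioo (0:ℝ) 1,
        H (μ * p₁ + (1 - μ) * p₂) ≤ μ * H p₁ + (1 - μ) * H p₂) := by
  -- basic differentiability facts
  have hU' : U ∈ 𝓝 (t, q) := hUopen.mem_nhds htq
  have hL₁ : HasFDerivAt f₁ (fderiv ℝ f₁ (t, q)) (t, q) :=
    (((hf₁.contDiffAt hU').differentiableAt one_ne_zero)).hasFDerivAt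
  have hL₂ : HasFDerivAt f₂ (fderiv ℝ f₂ (t, q)) (t, q) :=
    (((hf₂.contDiffAt hU').differentiableAt one_ne_zero)).hasFDerivAt
  set L₁ := fderiv ℝ f₁ (t, q) with hL₁def
  set L₂ := fderiv ℝ f₂ (t, q) with hL₂def
  have ht₁ : HasDerivAt (fun s => f₁ (s, q)) (L₁ (1, 0)) t := aux_slice_t hL₁
  have hq₁ : HasDerivAt (fun y => f₁ (t, y)) (L₁ (0, 1)) q := aux_slice_q hL₁
  have ht₂ : HasDerivAt (fun s => f₂ (s, q)) (L₂ (1, 0)) t := aux_slice_t hL₂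
  have hq₂ : HasDerivAt (fun y => f₂ (t, y)) (L₂ (0, 1)) q := aux_slice_q hL₂
  have hp₁' : p₁ = L₁ (0, 1) := by rw [hp₁, hq₁.deriv]
  have hp₂' : p₂ = L₂ (0, 1) := by rw [hp₂, hq₂.deriv]
  have ha₁ : L₁ (1, 0) + H p₁ = 0 := by
    have h : deriv (fun s => f₁ (s, q)) t + H (deriv (fun y => f₁ (t, y)) q) = 0 :=
      hpde₁ (t, q) htq
    rw [ht₁.deriv, ← hp₁] at h
    exact h
  have ha₂ : L₂ (1, 0) + H p₂ = 0 := by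
    have h : deriv (fun s => f₂ (s, q)) t + H (deriv (fun y => f₂ (t, y)) q) = 0 :=
      hpde₂ (t, q) htq
    rw [ht₂.deriv, ← hp₂] at h
    exact h
  have hmintq : min (f₁ (t, q)) (f₂ (t, q)) = f₁ (t, q) := by simp [heq]
  constructor
  · -- viscosity solution → entropy
    rintro ⟨hsub, -⟩ μ hμ
    obtain ⟨hμ0, hμ1⟩ := hμ
    set g : ℝ × ℝ → ℝ := fun x => μ * f₁ x + (1 - μ) * f₂ x with hgdef
    have hg : ContDiffOn ℝ 1 g U := (contDiffOn_const.mul hf₁).add (contDiffOn_const.mul hf₂)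
    obtain ⟨φ, hφC, hφeq⟩ := aux_ext hUopen htq hg
    have hφtq : φ (t, q) = g (t, q) := hφeq.eq_of_nhds
    have hmax : IsLocalMax (fun y => min (f₁ y) (f₂ y) - φ y) (t, q) := by
      filter_upwards [hφeq] with y hy
      have hgy : g y = μ * f₁ y + (1 - μ) * f₂ y := rfl
      have hmle : min (f₁ y) (f₂ y) ≤ g y := by
        rcases le_total (f₁ y) (f₂ y) with h | h
        · rw [min_eq_left h, hgy]; nlinarith
        · rw [min_eq_right h, hgy]; nlinarith
      have hgeq : g (t, q) = f₁ (t, q) := by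
        have : g (t, q) = μ * f₁ (t, q) + (1 - μ) * f₂ (t, q) := rfl
        rw [this, heq]; ring
      simp only [hy, hφtq, hmintq, hgeq]
      linarith
    have hkey := hsub φ hφC hmax
    have hslice_t : (fun s => φ (s, q)) =ᶠ[𝓝 t] (fun s => g (s, q)) := by
      have hc : ContinuousAt (fun s : ℝ => ((s, q) : ℝ × ℝ)) t :=
        (continuous_id.prodMk continuous_const).continuousAt
      exact hc.eventually hφeq
    have hslice_q : (fun y => φ (t, y)) =ᶠ[𝓝 q] (fun y => g (t, y)) := by
      have hc : ContinuousAt (fun y : ℝ => ((t, y) : ℝ × ℝ)) q :=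
        (continuous_const.prodMk continuous_id).continuousAt
      exact hc.eventually hφeq
    have hgt : HasDerivAt (fun s => g (s, q)) (μ * L₁ (1, 0) + (1 - μ) * L₂ (1, 0)) t :=
      (ht₁.const_mul μ).add (ht₂.const_mul (1 - μ))
    have hgq : HasDerivAt (fun y => g (t, y)) (μ * L₁ (0, 1) + (1 - μ) * L₂ (0, 1)) q :=
      (hq₁.const_mul μ).add (hq₂.const_mul (1 - μ))
    rw [hslice_t.deriv_eq, hslice_q.deriv_eq, hgt.deriv, hgq.deriv, ← hp₁', ← hp₂'] at hkey
    have e₁ : μ * L₁ (1, 0) = -(μ * H p₁) := by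
      rw [show L₁ (1, 0) = -H p₁ by linarith]; ring
    have e₂ : (1 - μ) * L₂ (1, 0) = -((1 - μ) * H p₂) := by
      rw [show L₂ (1, 0) = -H p₂ by linarith]; ring
    linarith
  · -- entropy → viscosity solution
    intro hent
    constructor
    · -- subsolution
      intro φ hφC hmax
      have hL : HasFDerivAt φ (fderiv ℝ φ (t, q)) (t, q) :=
        (hφC.differentiable one_ne_zero (t, q)).hasFDerivAt
      set L := fderiv ℝ φ (t, q) with hLdef
      rw [(aux_slice_t hL).deriv, (aux_slice_q hL).deriv]
      obtain ⟨α₁, hα₁def⟩ : ∃ a : ℝ, a = L₁ (1, 0) - L (1, 0) := ⟨_, rfl⟩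
      obtain ⟨β₁, hβ₁def⟩ : ∃ a : ℝ, a = L₁ (0, 1) - L (0, 1) := ⟨_, rfl⟩
      obtain ⟨α₂, hα₂def⟩ : ∃ a : ℝ, a = L₂ (1, 0) - L (1, 0) := ⟨_, rfl⟩
      obtain ⟨β₂, hβ₂def⟩ : ∃ a : ℝ, a = L₂ (0, 1) - L (0, 1) := ⟨_, rfl⟩
      have hmax' : ∀ᶠ y in 𝓝 (t, q),
          min (f₁ y) (f₂ y) - φ y ≤ min (f₁ (t, q)) (f₂ (t, q)) - φ (t, q) := hmax
      have claim : ∀ w : ℝ × ℝ, min (α₁ * w.1 + β₁ * w.2) (α₂ * w.1 + β₂ * w.2) ≤ 0 := by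
        intro w
        by_contra hcon
        push_neg at hcon
        rw [lt_min_iff] at hcon
        obtain ⟨h1, h2⟩ := hcon
        have hG₁ : HasDerivAt
            (fun s : ℝ => f₁ (t + s * w.1, q + s * w.2) - φ (t + s * w.1, q + s * w.2)
              - (f₁ (t, q) - φ (t, q))) (α₁ * w.1 + β₁ * w.2) 0 := by
          have hs := ((aux_dir hL₁ w).sub (aux_dir hL w)).sub_const (f₁ (t, q) - φ (t, q))
          have : L₁ w - L w = α₁ * w.1 + β₁ * w.2 := by
            rw [lin_expand L₁ w, lin_expand L w, hα₁def, hβ₁def]; ring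
          rwa [this] at hs
        have hG₂ : HasDerivAt
            (fun s : ℝ => f₂ (t + s * w.1, q + s * w.2) - φ (t + s * w.1, q + s * w.2)
              - (f₂ (t, q) - φ (t, q))) (α₂ * w.1 + β₂ * w.2) 0 := by
          have hs := ((aux_dir hL₂ w).sub (aux_dir hL w)).sub_const (f₂ (t, q) - φ (t, q))
          have : L₂ w - L w = α₂ * w.1 + β₂ * w.2 := by
            rw [lin_expand L₂ w, lin_expand L w, hα₂def, hβ₂def]; ring
          rwa [this] at hs
        have hG₁0 : (fun s : ℝ => f₁ (t + s * w.1, q + s * w.2) - φ (t + s * w.1, q + s * w.2)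
              - (f₁ (t, q) - φ (t, q))) 0 = 0 := by norm_num
        have hG₂0 : (fun s : ℝ => f₂ (t + s * w.1, q + s * w.2) - φ (t + s * w.1, q + s * w.2)
              - (f₂ (t, q) - φ (t, q))) 0 = 0 := by norm_num
        have hP₁ := aux_pos_near hG₁0 hG₁ h1
        have hP₂ := aux_pos_near hG₂0 hG₂ h2
        have hz : Filter.Tendsto (fun s : ℝ => ((t + s * w.1, q + s * w.2) : ℝ × ℝ))
            (𝓝 0) (𝓝 (t, q)) := by
          have hc : Continuous (fun s : ℝ => ((t + s * w.1, q + s * w.2) : ℝ × ℝ)) :=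
            (continuous_const.add (continuous_id.mul continuous_const)).prodMk
              (continuous_const.add (continuous_id.mul continuous_const))
          have h0 : Filter.Tendsto (fun s : ℝ => ((t + s * w.1, q + s * w.2) : ℝ × ℝ))
              (𝓝 0) (𝓝 (t + 0 * w.1, q + 0 * w.2)) := hc.continuousAt
          rw [show ((t + 0 * w.1, q + 0 * w.2) : ℝ × ℝ) = (t, q) by norm_num] at h0
          exact h0
        have hev : ∀ᶠ s in 𝓝[>] (0:ℝ),
            min (f₁ (t + s * w.1, q + s * w.2)) (f₂ (t + s * w.1, q + s * w.2))
              - φ (t + s * w.1, q + s * w.2)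
              ≤ min (f₁ (t, q)) (f₂ (t, q)) - φ (t, q) :=
          (hz.eventually hmax').filter_mono nhdsWithin_le_nhds
        obtain ⟨s, hs₁, hs₂, hs₃⟩ := (hP₁.and (hP₂.and hev)).exists
        rcases le_total (f₁ (t + s * w.1, q + s * w.2)) (f₂ (t + s * w.1, q + s * w.2)) with h | h
        · rw [min_eq_left h, hmintq] at hs₃; linarith
        · rw [min_eq_right h, hmintq] at hs₃; linarith [heq]
      -- 2D geometry
      by_cases hv₂ : α₂ = 0 ∧ β₂ = 0
      · obtain ⟨hα, hβ⟩ := hv₂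
        have e1 : L (1, 0) = L₂ (1, 0) := by
          have := hα; rw [hα₂def] at this; linarith
        have e2 : L (0, 1) = L₂ (0, 1) := by
          have := hβ; rw [hβ₂def] at this; linarith
        rw [e1, e2, ← hp₂']
        linarith
      · have hne : α₂ ≠ 0 ∨ β₂ ≠ 0 := by
          by_contra hc; push_neg at hc; exact hv₂ ⟨hc.1, hc.2⟩
        have hnn : 0 < α₂ ^ 2 + β₂ ^ 2 := by
          rcases hne with h | h
          · positivity
          · positivity
        have hdot : α₁ * α₂ + β₁ * β₂ ≤ 0 := by
          have hcl : min (α₁ * α₂ + β₁ * β₂) (α₂ * α₂ + β₂ * β₂) ≤ 0 := claim (α₂, β₂)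
          rcases min_le_iff.mp hcl with h | h
          · exact h
          · nlinarith
        have hcross : α₁ * β₂ - β₁ * α₂ = 0 := by
          have key : ∀ ε > (0:ℝ), α₁ * (-β₂ + ε * α₂) + β₁ * (α₂ + ε * β₂) ≤ 0 := by
            intro ε hε
            have hcl : min (α₁ * (-β₂ + ε * α₂) + β₁ * (α₂ + ε * β₂))
                (α₂ * (-β₂ + ε * α₂) + β₂ * (α₂ + ε * β₂)) ≤ 0 :=
              claim (-β₂ + ε * α₂, α₂ + ε * β₂)
            rcases min_le_iff.mp hcl with h | h
            · exact h
            · exfalso; nlinarith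
          have key' : ∀ ε > (0:ℝ), α₁ * (β₂ + ε * α₂) + β₁ * (-α₂ + ε * β₂) ≤ 0 := by
            intro ε hε
            have hcl : min (α₁ * (β₂ + ε * α₂) + β₁ * (-α₂ + ε * β₂))
                (α₂ * (β₂ + ε * α₂) + β₂ * (-α₂ + ε * β₂)) ≤ 0 :=
              claim (β₂ + ε * α₂, -α₂ + ε * β₂)
            rcases min_le_iff.mp hcl with h | h
            · exact h
            · exfalso; nlinarith
          have hside : ∀ C M : ℝ, 0 ≤ M → (∀ ε > (0:ℝ), C ≤ ε * M) → C ≤ 0 := by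
            intro C M hM hCM
            by_contra hc
            push_neg at hc
            have hden : (0:ℝ) < 2 * (M + 1) := by linarith
            have hε : (0:ℝ) < C / (2 * (M + 1)) := div_pos hc hden
            have hk := hCM _ hε
            have h2 : C / (2 * (M + 1)) * M < C := by
              rw [div_mul_eq_mul_div, div_lt_iff₀ hden]
              nlinarith
            linarith
          have hM : (0:ℝ) ≤ -(α₁ * α₂ + β₁ * β₂) := by linarith
          have h1 : -(α₁ * β₂ - β₁ * α₂) ≤ 0 := by
            refine hside _ _ hM (fun ε hε => ?_)
            have := key ε hε; nlinarith
          have h2 : (α₁ * β₂ - β₁ * α₂) ≤ 0 := by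
            refine hside _ _ hM (fun ε hε => ?_)
            have := key' ε hε; nlinarith
          linarith
        obtain ⟨c, hc0, hcα, hcβ⟩ :
            ∃ c : ℝ, c ≤ 0 ∧ α₁ = c * α₂ ∧ β₁ = c * β₂ := by
          rcases hne with h | h
          · refine ⟨α₁ / α₂, ?_, by field_simp, ?_⟩
            · have hdd : (α₁ / α₂) * (α₂ ^ 2 + β₂ ^ 2) ≤ 0 := by
                have : (α₁ / α₂) * (α₂ ^ 2 + β₂ ^ 2) = α₁ * α₂ + β₁ * β₂ := by
                  field_simp; linear_combination β₂ * hcross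
                rw [this]; exact hdot
              nlinarith
            · field_simp; nlinarith [hcross]
          · refine ⟨β₁ / β₂, ?_, ?_, by field_simp⟩
            · have hdd : (β₁ / β₂) * (α₂ ^ 2 + β₂ ^ 2) ≤ 0 := by
                have : (β₁ / β₂) * (α₂ ^ 2 + β₂ ^ 2) = α₁ * α₂ + β₁ * β₂ := by
                  field_simp; linear_combination (-α₂) * hcross
                rw [this]; exact hdot
              nlinarith
            · field_simp; nlinarith [hcross]
        obtain ⟨μ, hμdef⟩ : ∃ m : ℝ, m = 1 / (1 - c) := ⟨_, rfl⟩
        have h1c : (0:ℝ) < 1 - c := by linarith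
        have hμ0 : 0 < μ := by rw [hμdef]; positivity
        have hμ1 : μ ≤ 1 := by rw [hμdef, div_le_one h1c]; linarith
        have hcomb : μ * c + (1 - μ) = 0 := by
          rw [hμdef]; field_simp; ring
        have hA : μ * α₁ + (1 - μ) * α₂ = 0 := by
          calc μ * α₁ + (1 - μ) * α₂ = (μ * c + (1 - μ)) * α₂ := by rw [hcα]; ring
            _ = 0 := by rw [hcomb]; ring
        have hB : μ * β₁ + (1 - μ) * β₂ = 0 := by
          calc μ * β₁ + (1 - μ) * β₂ = (μ * c + (1 - μ)) * β₂ := by rw [hcβ]; ring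
            _ = 0 := by rw [hcomb]; ring
        have hA' : μ * (L₁ (1, 0) - L (1, 0)) + (1 - μ) * (L₂ (1, 0) - L (1, 0)) = 0 := by
          rw [← hα₁def, ← hα₂def]; exact hA
        have hB' : μ * (L₁ (0, 1) - L (0, 1)) + (1 - μ) * (L₂ (0, 1) - L (0, 1)) = 0 := by
          rw [← hβ₁def, ← hβ₂def]; exact hB
        have eL1 : L (1, 0) = μ * L₁ (1, 0) + (1 - μ) * L₂ (1, 0) := by
          linear_combination -hA'
        have eL2 : L (0, 1) = μ * p₁ + (1 - μ) * p₂ := by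
          rw [hp₁', hp₂']; linear_combination -hB'
        rw [eL1, eL2]
        have e₁ : μ * L₁ (1, 0) = -(μ * H p₁) := by
          rw [show L₁ (1, 0) = -H p₁ by linarith]; ring
        have e₂ : (1 - μ) * L₂ (1, 0) = -((1 - μ) * H p₂) := by
          rw [show L₂ (1, 0) = -H p₂ by linarith]; ring
        by_cases hμe : μ = 1
        · rw [hμe] at e₁ e₂ ⊢
          have : (1:ℝ) * p₁ + (1 - 1) * p₂ = p₁ := by ring
          rw [this]
          linarith
        · have hμIoo : μ ∈ Set.Ioo (0:ℝ) 1 := ⟨hμ0, lt_of_le_of_ne hμ1 hμe⟩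
          have hE := hent μ hμIoo
          linarith
    · -- supersolution
      intro φ hφC hmin
      have hL : HasFDerivAt φ (fderiv ℝ φ (t, q)) (t, q) :=
        (hφC.differentiable one_ne_zero (t, q)).hasFDerivAt
      set L := fderiv ℝ φ (t, q) with hLdef
      have hmin₁ : IsLocalMin (fun y => f₁ y - φ y) (t, q) := by
        filter_upwards [hmin] with y hy
        have h1 : min (f₁ y) (f₂ y) ≤ f₁ y := min_le_left _ _
        simp only [hmintq] at hy
        linarith
      have hzero : L₁ - L = 0 := hmin₁.hasFDerivAt_eq_zero (hL₁.sub hL)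
      have hLe : L₁ = L := sub_eq_zero.mp hzero
      rw [(aux_slice_t hL).deriv, (aux_slice_q hL).deriv, ← hLe, ← hp₁']
      linarith
end
end

section
/- Let A : ℝ^n → M_n(ℝ) be a continuous matrix-valued function and let U₁ and U₂ be disjoint nonempty open subsets of ℝ^n such that A(x) ≠ 0 for every x ∈ U₁ ∪ U₂. Then there exists (x₁, x₂) ∈ U₁ × U₂ such that A(x₁)(x₁ − x₂) ≠ 0 and A(x₂)(x₁ − x₂) ≠ 0, i.e. x₁ − x₂ ∉ Ker A(x₁) ∪ Ker A(x₂). -/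
open Filter Topology Set Matrix

noncomputable section

private lemma key11 {n : ℕ} (M : Matrix (Fin n) (Fin n) ℝ) (hM : M ≠ 0)
    (S : Set (Fin n → ℝ)) (hS : IsOpen S) (hne : S.Nonempty) (c : Fin n → ℝ) :
    ∃ v ∈ S, M *ᵥ (v - c) ≠ 0 := by
  by_contra h
  push_neg at h
  obtain ⟨v₀, hv₀⟩ := hne
  obtain ⟨ε, hε, hball⟩ := Metric.isOpen_iff.1 hS v₀ hv₀
  have hz : ∀ e : Fin n → ℝ, M *ᵥ e = 0 := by
    intro e
    set t : ℝ := ε / (2 * (‖e‖ + 1)) with ht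
    have hpos : 0 < ‖e‖ + 1 := by positivity
    have htpos : 0 < t := by positivity
    have hmem : v₀ + t • e ∈ S := by
      apply hball
      rw [Metric.mem_ball, dist_eq_norm]
      have : v₀ + t • e - v₀ = t • e := by ring_nf
      rw [this, norm_smul]
      have h1 : ‖t‖ = t := abs_of_pos htpos
      rw [h1]
      have h2 : ‖e‖ < ‖e‖ + 1 := by linarith
      calc t * ‖e‖ ≤ t * (‖e‖ + 1) := by nlinarith
        _ = ε / 2 := by rw [ht, div_mul_eq_mul_div, mul_div_mul_right _ _ hpos.ne']
        _ < ε := by linarith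
    have h1 := h _ hmem
    have h2 := h _ hv₀
    have : M *ᵥ (t • e) = 0 := by
      have heq : (v₀ + t • e - c) = (v₀ - c) + t • e := by ring_nf
      rw [heq, Matrix.mulVec_add, h2, zero_add] at h1
      exact h1
    rw [Matrix.mulVec_smul] at this
    have := smul_eq_zero.1 this
    rcases this with h' | h'
    · exact absurd h' (ne_of_gt htpos)
    · exact h'
  apply hM
  ext i j
  have := congrFun (hz (Pi.single j 1)) i
  simpa using this

/-- If `A : ℝ^n → M_n(ℝ)` is continuous and `U₁`, `U₂` are disjoint
nonempty open sets on which `A` does not vanish, there exists `(x₁,x₂) ∈ U₁ × U₂` with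
`x₁ − x₂ ∉ Ker A(x₁) ∪ Ker A(x₂)`. -/
theorem statement11 (n : ℕ) (A : (Fin n → ℝ) → Matrix (Fin n) (Fin n) ℝ)
    (hA : Continuous A)
    (U₁ U₂ : Set (Fin n → ℝ))
    (hU₁ : IsOpen U₁) (hU₂ : IsOpen U₂)
    (hne₁ : U₁.Nonempty) (hne₂ : U₂.Nonempty)
    (hdisj : Disjoint U₁ U₂)
    (hA₁ : ∀ x ∈ U₁ ∪ U₂, A x ≠ 0) :
    ∃ x₁ ∈ U₁, ∃ x₂ ∈ U₂,
      A x₁ *ᵥ (x₁ - x₂) ≠ 0 ∧ A x₂ *ᵥ (x₁ - x₂) ≠ 0 := by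
  obtain ⟨a, ha⟩ := hne₁
  -- find x₂ ∈ U₂ with A a *ᵥ (x₂ - a) ≠ 0
  obtain ⟨b, hb, hb'⟩ := key11 (A a) (hA₁ a (Or.inl ha)) U₂ hU₂ hne₂ a
  -- the open set W ⊆ U₁ of points y with A y *ᵥ (y - b) ≠ 0
  set W : Set (Fin n → ℝ) := U₁ ∩ {y | A y *ᵥ (y - b) ≠ 0} with hW
  have hWopen : IsOpen W := by
    apply hU₁.inter
    have hc : Continuous fun y => A y *ᵥ (y - b) :=
      (hA.matrix_mulVec (continuous_id.sub continuous_const))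
    exact isOpen_compl_singleton.preimage hc
  have haW : a ∈ W := by
    refine ⟨ha, ?_⟩
    simp only [Set.mem_setOf_eq]
    intro h0
    apply hb'
    have : a - b = -(b - a) := by ring_nf
    rw [show (b - a) = -(a - b) by ring_nf, Matrix.mulVec_neg, h0, neg_zero]
  obtain ⟨y, hyW, hy'⟩ := key11 (A b) (hA₁ b (Or.inr hb)) W hWopen ⟨a, haW⟩ b
  exact ⟨y, hyW.1, b, hb, hyW.2, hy'⟩
end
end

section
/- Let H : ℝ → ℝ be a C² function which is neither convex nor concave. Then there exists ε ∈ {1, −1} such that the function G(p) = H(εp) admits points p₁ < p₂ with: G''(p₂) < 0; the strict entropy inequality (G(p) − G(p₁))/(p − p₁) < (G(p₂) − G(p₁))/(p₂ − p₁) for all p ∈ (p₁, p₂); and G'(p₁) < (G(p₂) − G(p₁))/(p₂ − p₁) = G'(p₂). -/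
open Filter Topology Set

noncomputable section

open MeasureTheory

lemma cont_pos_nbhd {f : ℝ → ℝ} (hf : Continuous f) {x : ℝ} (hx : 0 < f x) :
    ∃ δ > 0, ∀ y, |y - x| ≤ δ → 0 < f y := by
  rcases Metric.continuousAt_iff.1 (hf.continuousAt (x := x)) (f x) hx with ⟨ε, εpos, hε⟩
  refine ⟨ε / 2, by linarith, fun y hy => ?_⟩
  have h1 : dist y x < ε := by rw [Real.dist_eq]; linarith
  have h2 := hε h1
  rw [Real.dist_eq, abs_lt] at h2
  linarith

lemma cont_neg_nbhd {f : ℝ → ℝ} (hf : Continuous f) {x : ℝ} (hx : f x < 0) :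
    ∃ δ > 0, ∀ y, |y - x| ≤ δ → f y < 0 := by
  rcases cont_pos_nbhd (hf.neg) (x := x) (by show 0 < -f x; linarith) with ⟨δ, hδ, h⟩
  exact ⟨δ, hδ, fun y hy => by have := h y hy; simp at this; linarith⟩

lemma key_slope (G : ℝ → ℝ) (hdiff : Differentiable ℝ G) (hdiff' : Differentiable ℝ (deriv G))
    (hcont'' : Continuous (deriv (deriv G))) {a bstar δ₁ : ℝ}
    (habstar : a < bstar) (hδ₁pos : 0 < δ₁) (hδ₁bstar : a + δ₁ ≤ bstar)
    (hmono : MonotoneOn (deriv G) (Icc a bstar))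
    (hkey : ∀ x ∈ Icc a (a + δ₁ / 2), deriv G x < deriv G bstar) :
    G bstar - G a < deriv G bstar * (bstar - a) := by
  have hFd : ∀ x : ℝ, HasDerivAt (fun y => deriv G bstar * y - G y) (deriv G bstar - deriv G x) x := by
    intro x
    exact (((hasDerivAt_id x).const_mul (deriv G bstar)).sub (hdiff x).hasDerivAt).congr_deriv (by ring)
  have hFderiv : deriv (fun y => deriv G bstar * y - G y) = fun x => deriv G bstar - deriv G x :=
    funext fun x => (hFd x).deriv
  have hFcont : Continuous (fun y => deriv G bstar * y - G y) :=
    (continuous_const.mul continuous_id).sub hdiff.continuous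
  have hFmono : MonotoneOn (fun y => deriv G bstar * y - G y) (Icc a bstar) := by
    refine monotoneOn_of_deriv_nonneg (convex_Icc _ _) hFcont.continuousOn
      (fun x _ => (hFd x).differentiableAt.differentiableWithinAt) ?_
    intro x hx
    rw [interior_Icc] at hx
    rw [hFderiv]
    show 0 ≤ deriv G bstar - deriv G x
    have := hmono ⟨le_of_lt hx.1, le_of_lt hx.2⟩ ⟨le_of_lt habstar, le_refl _⟩ (le_of_lt hx.2)
    linarith
  have hFstrict : StrictMonoOn (fun y => deriv G bstar * y - G y) (Icc a (a + δ₁ / 2)) := by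
    refine strictMonoOn_of_deriv_pos (convex_Icc _ _) hFcont.continuousOn ?_
    intro x hx
    rw [interior_Icc] at hx
    rw [hFderiv]
    show 0 < deriv G bstar - deriv G x
    have := hkey x ⟨le_of_lt hx.1, le_of_lt hx.2⟩
    linarith
  have h1 : deriv G bstar * a - G a < deriv G bstar * (a + δ₁ / 2) - G (a + δ₁ / 2) :=
    hFstrict ⟨le_refl _, by linarith⟩ ⟨by linarith, le_refl _⟩ (by linarith)
  have h2 : deriv G bstar * (a + δ₁ / 2) - G (a + δ₁ / 2) ≤ deriv G bstar * bstar - G bstar :=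
    hFmono ⟨by linarith, by linarith⟩ ⟨le_of_lt habstar, le_refl _⟩ (by linarith)
  nlinarith

lemma key_mid (G : ℝ → ℝ) (hdiff : Differentiable ℝ G) (hdiff' : Differentiable ℝ (deriv G))
    (hcont'' : Continuous (deriv (deriv G))) {a b₀ bstar : ℝ}
    (Sset : Set ℝ) (hSdef : Sset = {x | x ∈ Icc a b₀ ∧ deriv (deriv G) x < 0})
    (hbstardef : bstar = sInf Sset) (hSne : b₀ ∈ Sset) (hSbdd : BddBelow Sset)
    (habstar : a < bstar) (hbsnn : 0 ≤ deriv (deriv G) bstar)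
    (hW : G bstar - G a < deriv G bstar * (bstar - a)) :
    ∃ w d : ℝ, a < w ∧ w < d ∧ deriv (deriv G) w < 0 ∧
      0 < G a - (G w + deriv G w * (a - w)) ∧
      (∀ x ∈ Icc a d, deriv (deriv G) x = 0 → deriv G x ≠ deriv G w) := by
  -- continuity of the "witness" function
  have hWcont : Continuous (fun x => deriv G x * (x - a) - (G x - G a)) :=
    (hdiff'.continuous.mul (continuous_id.sub continuous_const)).sub
      (hdiff.continuous.sub continuous_const)
  have hWb : 0 < deriv G bstar * (bstar - a) - (G bstar - G a) := by linarith
  obtain ⟨η, hηpos, hη⟩ := cont_pos_nbhd hWcont hWb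
  -- a point w₀ with G'' < 0 slightly to the right of bstar
  have hx₀ : ∃ x₀ ∈ Sset, x₀ < bstar + η := by
    rw [hbstardef] at *
    exact (csInf_lt_iff hSbdd ⟨b₀, hSne⟩).1 (by linarith)
  obtain ⟨x₀, hx₀S, hx₀lt⟩ := hx₀
  have hx₀neg : deriv (deriv G) x₀ < 0 := by rw [hSdef] at hx₀S; exact hx₀S.2
  have hx₀ge : bstar ≤ x₀ := hbstardef ▸ csInf_le hSbdd hx₀S
  have hx₀gt : bstar < x₀ := lt_of_le_of_ne hx₀ge (by intro h; rw [← h] at hx₀neg; linarith)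
  -- open set U
  have hUopen : IsOpen ({x | deriv (deriv G) x < 0} ∩ Ioo bstar (bstar + η)) :=
    (isOpen_lt hcont'' continuous_const).inter isOpen_Ioo
  have hx₀U : x₀ ∈ {x | deriv (deriv G) x < 0} ∩ Ioo bstar (bstar + η) :=
    ⟨hx₀neg, hx₀gt, hx₀lt⟩
  obtain ⟨c, d, hx₀cd, hcdU⟩ := mem_nhds_iff_exists_Ioo_subset.1 (hUopen.mem_nhds hx₀U)
  set c' := (c + x₀) / 2 with hc'def
  set d' := (x₀ + d) / 2 with hd'def
  have hcc' : c < c' := by rw [hc'def]; rcases hx₀cd with ⟨h1, h2⟩; linarith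
  have hc'x₀ : c' < x₀ := by rw [hc'def]; rcases hx₀cd with ⟨h1, h2⟩; linarith
  have hx₀d' : x₀ < d' := by rw [hd'def]; rcases hx₀cd with ⟨h1, h2⟩; linarith
  have hd'd : d' < d := by rw [hd'def]; rcases hx₀cd with ⟨h1, h2⟩; linarith
  have hc'd' : c' < d' := by linarith
  have hsubU : Icc c' d' ⊆ {x | deriv (deriv G) x < 0} ∩ Ioo bstar (bstar + η) := by
    intro x hx
    exact hcdU ⟨lt_of_lt_of_le hcc' hx.1, lt_of_le_of_lt hx.2 hd'd⟩
  -- G' is strictly decreasing on [c', d']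
  have hanti : StrictAntiOn (deriv G) (Icc c' d') := by
    refine strictAntiOn_of_deriv_neg (convex_Icc _ _) hdiff'.continuous.continuousOn ?_
    intro x hx
    rw [interior_Icc] at hx
    exact (hsubU ⟨le_of_lt hx.1, le_of_lt hx.2⟩).1
  have hg'lt : deriv G d' < deriv G c' :=
    hanti ⟨le_refl _, le_of_lt hc'd'⟩ ⟨le_of_lt hc'd', le_refl _⟩ hc'd'
  -- Sard: the set of critical values of G' on [a,d] is null
  set s₀ : Set ℝ := {x | x ∈ Icc a d ∧ deriv (deriv G) x = 0} with hs₀def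
  have hs₀d : ∀ x ∈ s₀, HasFDerivWithinAt (deriv G)
      ((1 : ℝ →L[ℝ] ℝ).smulRight (deriv (deriv G) x)) s₀ x := fun x _ =>
    ((hdiff' x).hasDerivAt.hasFDerivAt).hasFDerivWithinAt
  have hs₀det : ∀ x ∈ s₀, ((1 : ℝ →L[ℝ] ℝ).smulRight (deriv (deriv G) x)).det = 0 := by
    intro x hx
    rw [show (1 : ℝ →L[ℝ] ℝ).smulRight (deriv (deriv G) x) = ContinuousLinearMap.toSpanSingleton ℝ (deriv (deriv G) x) from by ext; simp, ContinuousLinearMap.det_toSpanSingleton]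
    exact hx.2
  have hnull : volume (deriv G '' s₀) = 0 :=
    MeasureTheory.addHaar_image_eq_zero_of_det_fderivWithin_eq_zero volume hs₀d hs₀det
  -- choose a regular value v
  have hTsub : Icc (deriv G d') (deriv G c') ⊆ deriv G '' Icc c' d' :=
    intermediate_value_Icc' (le_of_lt hc'd') hdiff'.continuous.continuousOn
  have hEx : ∃ v ∈ Icc (deriv G d') (deriv G c'), v ∉ deriv G '' s₀ := by
    by_contra hcon
    push_neg at hcon
    have hsub : Icc (deriv G d') (deriv G c') ⊆ deriv G '' s₀ := fun v hv => hcon v hv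
    have hle : volume (Icc (deriv G d') (deriv G c')) = 0 :=
      le_antisymm (hnull ▸ measure_mono (μ := volume) hsub) (zero_le)
    rw [Real.volume_Icc] at hle
    have hpos : (0:ℝ) < deriv G c' - deriv G d' := by linarith
    exact (ENNReal.ofReal_pos.2 hpos).ne' hle
  obtain ⟨v, hvT, hvBad⟩ := hEx
  obtain ⟨w, hwIcc, hwv⟩ := hTsub hvT
  have hwU := hsubU hwIcc
  have hwneg : deriv (deriv G) w < 0 := hwU.1
  have hwIoo : w ∈ Ioo bstar (bstar + η) := hwU.2
  have haw : a < w := lt_trans habstar hwIoo.1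
  have hwd : w < d := lt_of_le_of_lt hwIcc.2 hd'd
  -- the witness inequality at a
  have hWw : 0 < deriv G w * (w - a) - (G w - G a) := by
    refine hη w ?_
    rw [abs_le]
    constructor <;> [linarith [hwIoo.1]; linarith [hwIoo.2]]
  refine ⟨w, d, haw, hwd, hwneg, by nlinarith, ?_⟩
  intro x hxIcc hx0 hxv
  exact hvBad ⟨x, ⟨hxIcc, hx0⟩, by rw [hxv, hwv]⟩

lemma key_tail (G : ℝ → ℝ) (hdiff : Differentiable ℝ G) (hdiff' : Differentiable ℝ (deriv G))
    (hcont'' : Continuous (deriv (deriv G))) {a w d v : ℝ}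
    (haw : a < w) (hwd : w ≤ d) (hwv : deriv G w = v)
    (hwneg : deriv (deriv G) w < 0)
    (hζa : 0 < G a - (G w + v * (a - w)))
    (hSard : ∀ x ∈ Icc a d, deriv (deriv G) x = 0 → deriv G x ≠ v) :
    ∃ p₁ p₂ : ℝ, p₁ < p₂ ∧ deriv (deriv G) p₂ < 0 ∧
      (∀ p ∈ Set.Ioo p₁ p₂, (G p - G p₁) / (p - p₁) < (G p₂ - G p₁) / (p₂ - p₁)) ∧
      deriv G p₁ < (G p₂ - G p₁) / (p₂ - p₁) ∧
      (G p₂ - G p₁) / (p₂ - p₁) = deriv G p₂ := by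
  set ζ : ℝ → ℝ := fun x => G x - (G w + v * (x - w)) with hζdef
  have hζcont : Continuous ζ :=
    hdiff.continuous.sub (continuous_const.add (continuous_const.mul
      (continuous_id.sub continuous_const)))
  have hζd : ∀ x : ℝ, HasDerivAt ζ (deriv G x - v) x := by
    intro x
    have h1 : HasDerivAt (fun y : ℝ => G w + v * (y - w)) v x := by
      simpa using (((hasDerivAt_id x).sub_const w).const_mul v).const_add (G w)
    exact (hdiff x).hasDerivAt.sub h1
  have hζderiv : deriv ζ = fun x => deriv G x - v := funext fun x => (hζd x).deriv
  have hζw : ζ w = 0 := by rw [hζdef]; ring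
  -- the set S of tangential zeros
  set S : Set ℝ := {x | x ∈ Icc a w ∧ ζ x = 0 ∧ deriv G x = v ∧ deriv (deriv G) x ≤ 0}
    with hSdef
  have hSclosed : IsClosed S := by
    have hEq : S = Icc a w ∩ ({x | ζ x = 0} ∩ ({x | deriv G x = v} ∩
        {x | deriv (deriv G) x ≤ 0})) := by
      ext x; simp [hSdef, and_assoc]
    rw [hEq]
    exact isClosed_Icc.inter ((isClosed_eq hζcont continuous_const).inter
      ((isClosed_eq hdiff'.continuous continuous_const).inter
        (isClosed_le hcont'' continuous_const)))
  have hSne : w ∈ S := ⟨⟨le_of_lt haw, le_refl _⟩, hζw, hwv, le_of_lt hwneg⟩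
  have hSbdd : BddBelow S := ⟨a, fun x hx => hx.1.1⟩
  set p₂ := sInf S with hp₂def
  have hp₂S : p₂ ∈ S := hSclosed.csInf_mem ⟨w, hSne⟩ hSbdd
  obtain ⟨hp₂Icc, hζp₂, hg'p₂, hg''p₂le⟩ := hp₂S
  have hp₂w : p₂ ≤ w := hp₂Icc.2
  have hp₂a : a ≤ p₂ := hp₂Icc.1
  have hζa' : ζ a > 0 := hζa
  have hap₂ : a < p₂ := by
    rcases eq_or_lt_of_le hp₂a with h | h
    · exfalso; rw [← h] at hζp₂; linarith
    · exact h
  have hg''p₂ : deriv (deriv G) p₂ < 0 := by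
    rcases lt_or_eq_of_le hg''p₂le with h | h
    · exact h
    · exact absurd hg'p₂ (hSard p₂ ⟨hp₂a, le_trans hp₂w hwd⟩ h)
  -- a small ρ with G'' < 0 around p₂
  obtain ⟨ρ₀, hρ₀pos, hρ₀⟩ := cont_neg_nbhd hcont'' hg''p₂
  set ρ := min ρ₀ ((p₂ - a) / 2) with hρdef
  have hρpos : 0 < ρ := lt_min hρ₀pos (by linarith)
  have hρρ₀ : ρ ≤ ρ₀ := min_le_left _ _
  have haρ : a < p₂ - ρ := by
    have : ρ ≤ (p₂ - a) / 2 := min_le_right _ _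
    linarith
  -- ζ < 0 on [p₂ - ρ, p₂)
  have hanti₂ : StrictAntiOn (deriv G) (Icc (p₂ - ρ) p₂) := by
    refine strictAntiOn_of_deriv_neg (convex_Icc _ _) hdiff'.continuous.continuousOn ?_
    intro x hx
    rw [interior_Icc] at hx
    exact hρ₀ x (by rw [abs_le]; constructor <;> [linarith [hx.1]; linarith [hx.2]])
  have hζmono : StrictMonoOn ζ (Icc (p₂ - ρ) p₂) := by
    refine strictMonoOn_of_deriv_pos (convex_Icc _ _) hζcont.continuousOn ?_
    intro x hx
    rw [interior_Icc] at hx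
    rw [hζderiv]
    show 0 < deriv G x - v
    have := hanti₂ ⟨le_of_lt hx.1, le_of_lt hx.2⟩ ⟨by linarith [hx.1], le_refl _⟩ hx.2
    rw [hg'p₂] at this
    linarith
  have hζnear : ∀ x ∈ Ico (p₂ - ρ) p₂, ζ x < 0 := by
    intro x hx
    have := hζmono ⟨hx.1, le_of_lt hx.2⟩ ⟨by linarith [hρpos], le_refl _⟩ hx.2
    rw [hζp₂] at this
    exact this
  -- the last zero p₁ of ζ before p₂
  set A : Set ℝ := Icc a (p₂ - ρ) ∩ {x | 0 ≤ ζ x} with hAdef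
  have hAclosed : IsClosed A := isClosed_Icc.inter (isClosed_le continuous_const hζcont)
  have hAne : a ∈ A := ⟨⟨le_refl _, le_of_lt haρ⟩, le_of_lt hζa'⟩
  have hAbdd : BddAbove A := ⟨p₂ - ρ, fun x hx => hx.1.2⟩
  set p₁ := sSup A with hp₁def
  have hp₁A : p₁ ∈ A := hAclosed.csSup_mem ⟨a, hAne⟩ hAbdd
  have hp₁max : ∀ x ∈ A, x ≤ p₁ := fun x hx => le_csSup hAbdd hx
  have hp₁ρ : p₁ ≤ p₂ - ρ := hp₁A.1.2
  have hp₁a : a ≤ p₁ := hp₁A.1.1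
  have hp₁p₂ : p₁ < p₂ := by linarith
  have hζneg : ∀ x ∈ Ioo p₁ p₂, ζ x < 0 := by
    intro x hx
    rcases le_or_gt x (p₂ - ρ) with h | h
    · by_contra hcon
      push_neg at hcon
      have hxA : x ∈ A := ⟨⟨le_trans hp₁a (le_of_lt hx.1), h⟩, hcon⟩
      linarith [hp₁max x hxA, hx.1]
    · exact hζnear x ⟨le_of_lt h, hx.2⟩
  have hζp₁ : ζ p₁ = 0 := by
    have hge : 0 ≤ ζ p₁ := hp₁A.2
    have hle : ζ p₁ ≤ 0 := by
      have htd : Tendsto ζ (𝓝[>] p₁) (𝓝 (ζ p₁)) :=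
        (hζcont.tendsto p₁).mono_left nhdsWithin_le_nhds
      refine le_of_tendsto htd ?_
      filter_upwards [Ioo_mem_nhdsGT_of_mem ⟨le_refl p₁, hp₁p₂⟩] with x hx
      exact le_of_lt (hζneg x hx)
    linarith
  -- Lax strict inequality at p₁
  have hg'p₁ : deriv G p₁ < v := by
    rcases lt_trichotomy (deriv G p₁) v with h | h | h
    · exact h
    · -- tangential touch: contradiction with minimality of p₂
      exfalso
      have hg''p₁ne : deriv (deriv G) p₁ ≠ 0 :=
        fun h0 => hSard p₁ ⟨hp₁a, by linarith [hwd, hp₂w]⟩ h0 h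
      rcases lt_or_gt_of_ne hg''p₁ne with hneg | hpos
      · -- then p₁ ∈ S, contradicting p₂ = sInf S
        have : p₁ ∈ S := ⟨⟨hp₁a, by linarith [hp₂w]⟩, hζp₁, h, le_of_lt hneg⟩
        have := csInf_le hSbdd this
        rw [← hp₂def] at this
        linarith
      · -- G'' > 0 at p₁ : ζ increases to the right, contradiction
        obtain ⟨σ₀, hσ₀pos, hσ₀⟩ := cont_pos_nbhd hcont'' hpos
        set σ := min σ₀ ((p₂ - p₁) / 2) with hσdef
        have hσpos : 0 < σ := lt_min hσ₀pos (by linarith)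
        have hσσ₀ : σ ≤ σ₀ := min_le_left _ _
        have hσp₂ : p₁ + σ < p₂ := by
          have : σ ≤ (p₂ - p₁) / 2 := min_le_right _ _
          linarith
        have hmonog' : StrictMonoOn (deriv G) (Icc p₁ (p₁ + σ)) := by
          refine strictMonoOn_of_deriv_pos (convex_Icc _ _) hdiff'.continuous.continuousOn ?_
          intro x hx
          rw [interior_Icc] at hx
          exact hσ₀ x (by rw [abs_le]; constructor <;> [linarith [hx.1]; linarith [hx.2]])
        have hζmono₂ : StrictMonoOn ζ (Icc p₁ (p₁ + σ)) := by
          refine strictMonoOn_of_deriv_pos (convex_Icc _ _) hζcont.continuousOn ?_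
          intro x hx
          rw [interior_Icc] at hx
          rw [hζderiv]
          show 0 < deriv G x - v
          have := hmonog' ⟨le_refl _, by linarith [hσpos]⟩ ⟨le_of_lt hx.1, le_of_lt hx.2⟩ hx.1
          rw [h] at this
          linarith
        have h1 : ζ p₁ < ζ (p₁ + σ) :=
          hζmono₂ ⟨le_refl _, by linarith⟩ ⟨by linarith, le_refl _⟩ (by linarith)
        have h2 : ζ (p₁ + σ) < 0 := hζneg (p₁ + σ) ⟨by linarith, hσp₂⟩
        rw [hζp₁] at h1
        linarith
    · -- deriv of ζ positive at p₁ : ζ > 0 just to the right, contradiction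
      exfalso
      have hd : HasDerivAt ζ (deriv G p₁ - v) p₁ := hζd p₁
      have hslope : Tendsto (slope ζ p₁) (𝓝[>] p₁) (𝓝 (deriv G p₁ - v)) :=
        (hasDerivAt_iff_tendsto_slope.1 hd).mono_left
          (nhdsWithin_mono _ (fun x hx => ne_of_gt hx))
      have h2 : ∀ᶠ x in 𝓝[>] p₁, 0 < slope ζ p₁ x :=
        hslope.eventually (eventually_gt_nhds (by linarith))
      have h3 : ∀ᶠ x in 𝓝[>] p₁, x ∈ Ioo p₁ p₂ :=
        Ioo_mem_nhdsGT_of_mem ⟨le_refl _, hp₁p₂⟩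
      obtain ⟨x, hx0, hxI⟩ := (h2.and h3).exists
      rw [slope_def_field, hζp₁, sub_zero] at hx0
      have hζxneg : ζ x < 0 := hζneg x hxI
      have hxp₁ : 0 < x - p₁ := by linarith [hxI.1]
      have : ζ x / (x - p₁) < 0 := div_neg_of_neg_of_pos hζxneg hxp₁
      linarith
  -- assemble the conclusion
  have hGp₁ : G p₁ = G w + v * (p₁ - w) := by
    have : G p₁ - (G w + v * (p₁ - w)) = 0 := hζp₁
    linarith
  have hGp₂ : G p₂ = G w + v * (p₂ - w) := by
    have : G p₂ - (G w + v * (p₂ - w)) = 0 := hζp₂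
    linarith
  have hp₂p₁ne : p₂ - p₁ ≠ 0 := sub_ne_zero.2 (ne_of_gt hp₁p₂)
  have hslopeval : (G p₂ - G p₁) / (p₂ - p₁) = v := by
    rw [hGp₁, hGp₂]
    field_simp
    ring
  refine ⟨p₁, p₂, hp₁p₂, hg''p₂, ?_, ?_, ?_⟩
  · intro p hp
    rw [hslopeval, div_lt_iff₀ (by linarith [hp.1] : (0:ℝ) < p - p₁)]
    have hζpneg : ζ p < 0 := hζneg p hp
    have : G p - (G w + v * (p - w)) < 0 := hζpneg
    nlinarith [hGp₁]
  · rw [hslopeval]; exact hg'p₁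
  · rw [hslopeval, hg'p₂]



/-- The key construction lemma. -/
lemma key (G : ℝ → ℝ) (hG : ContDiff ℝ 2 G) {a b₀ : ℝ} (hab : a < b₀)
    (haa : 0 < deriv (deriv G) a) (hbb : deriv (deriv G) b₀ < 0) :
    ∃ p₁ p₂ : ℝ, p₁ < p₂ ∧ deriv (deriv G) p₂ < 0 ∧
      (∀ p ∈ Set.Ioo p₁ p₂, (G p - G p₁) / (p - p₁) < (G p₂ - G p₁) / (p₂ - p₁)) ∧
      deriv G p₁ < (G p₂ - G p₁) / (p₂ - p₁) ∧
      (G p₂ - G p₁) / (p₂ - p₁) = deriv G p₂ := by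
  have h21 : (2 : WithTop ℕ∞) = 1 + 1 := by norm_num
  have hG1 : ContDiff ℝ 1 (deriv G) := by
    rw [h21, contDiff_succ_iff_deriv] at hG
    exact hG.2.2
  have hdiff : Differentiable ℝ G := hG.differentiable (by norm_num)
  have hdiff' : Differentiable ℝ (deriv G) := hG1.differentiable one_ne_zero
  have hcont'' : Continuous (deriv (deriv G)) := (contDiff_one_iff_deriv.1 hG1).2
  -- Step: δ around a where G'' > 0
  obtain ⟨δ, hδpos, hδ⟩ := cont_pos_nbhd hcont'' haa
  set δ₁ := min δ (b₀ - a) with hδ₁def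
  have hδ₁pos : 0 < δ₁ := lt_min hδpos (by linarith)
  have hδ₁δ : δ₁ ≤ δ := min_le_left _ _
  -- the set of points in [a,b₀] with negative second derivative
  set Sset : Set ℝ := {x | x ∈ Icc a b₀ ∧ deriv (deriv G) x < 0} with hSdef
  have hSne : b₀ ∈ Sset := ⟨⟨le_of_lt hab, le_refl _⟩, hbb⟩
  have hSbdd : BddBelow Sset := ⟨a, fun x hx => hx.1.1⟩
  set bstar := sInf Sset with hbstardef
  have hbstar_le : bstar ≤ b₀ := csInf_le hSbdd hSne
  have hlow : ∀ x ∈ Sset, a + δ₁ ≤ x := by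
    intro x hx
    by_contra hcon
    push_neg at hcon
    have hxa : a ≤ x := hx.1.1
    have : 0 < deriv (deriv G) x := hδ x (by rw [abs_le]; constructor <;> [linarith; linarith [hδ₁δ]])
    linarith [hx.2]
  have hδ₁bstar : a + δ₁ ≤ bstar := le_csInf ⟨b₀, hSne⟩ hlow
  have habstar : a < bstar := by linarith
  have hnn : ∀ x ∈ Ico a bstar, 0 ≤ deriv (deriv G) x := by
    intro x hx
    by_contra hcon
    push_neg at hcon
    have : x ∈ Sset := ⟨⟨hx.1, le_trans (le_of_lt hx.2) hbstar_le⟩, hcon⟩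
    linarith [csInf_le hSbdd this, hx.2]
  have hbsnn : 0 ≤ deriv (deriv G) bstar := by
    have htd : Tendsto (deriv (deriv G)) (𝓝[<] bstar) (𝓝 (deriv (deriv G) bstar)) :=
      (hcont''.tendsto bstar).mono_left nhdsWithin_le_nhds
    refine ge_of_tendsto htd ?_
    filter_upwards [Ioo_mem_nhdsLT_of_mem ⟨habstar, le_refl _⟩] with x hx
    exact hnn x ⟨le_of_lt hx.1, hx.2⟩
  have hnn' : ∀ x ∈ Icc a bstar, 0 ≤ deriv (deriv G) x := by
    intro x hx
    rcases eq_or_lt_of_le hx.2 with h | h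
    · rw [h]; exact hbsnn
    · exact hnn x ⟨hx.1, h⟩
  -- monotonicity of G' on [a, bstar]
  have hmono : MonotoneOn (deriv G) (Icc a bstar) := by
    refine monotoneOn_of_deriv_nonneg (convex_Icc _ _) hdiff'.continuous.continuousOn
      (hdiff'.differentiableOn) ?_
    intro x hx
    rw [interior_Icc] at hx
    exact hnn' x ⟨le_of_lt hx.1, le_of_lt hx.2⟩
  have hstrict : StrictMonoOn (deriv G) (Icc a (a + δ₁)) := by
    refine strictMonoOn_of_deriv_pos (convex_Icc _ _) hdiff'.continuous.continuousOn ?_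
    intro x hx
    rw [interior_Icc] at hx
    exact hδ x (by rw [abs_le]; constructor <;> [linarith [hx.1]; linarith [hx.2, hδ₁δ]])
  have hkey : ∀ x ∈ Icc a (a + δ₁ / 2), deriv G x < deriv G bstar := by
    intro x hx
    have h1 : deriv G x ≤ deriv G (a + δ₁ / 2) :=
      hstrict.monotoneOn ⟨hx.1, by linarith [hx.2]⟩ ⟨by linarith, by linarith⟩ hx.2
    have h2 : deriv G (a + δ₁ / 2) < deriv G (a + δ₁) :=
      hstrict ⟨by linarith, by linarith⟩ ⟨by linarith, le_refl _⟩ (by linarith)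
    have h3 : deriv G (a + δ₁) ≤ deriv G bstar :=
      hmono ⟨by linarith, hδ₁bstar⟩ ⟨le_of_lt habstar, le_refl _⟩ hδ₁bstar
    linarith
  have hW : G bstar - G a < deriv G bstar * (bstar - a) :=
    key_slope G hdiff hdiff' hcont'' habstar hδ₁pos hδ₁bstar hmono hkey
  obtain ⟨w, d, haw, hwd, hwneg, hζa, hSard⟩ :=
    key_mid G hdiff hdiff' hcont'' Sset hSdef hbstardef hSne hSbdd habstar hbsnn hW
  exact key_tail G hdiff hdiff' hcont'' haw (le_of_lt hwd) rfl hwneg hζa hSard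

/-- For a `C²` function `H : ℝ → ℝ`, neither convex nor concave, up to
the change of function `p ↦ H(−p)` there exist `p₁ < p₂` with `H''(p₂) < 0`, the strict
entropy condition between `p₁` and `p₂`, and the Lax condition an equality at `p₂` and a
strict inequality at `p₁`. -/
theorem statement12 (H : ℝ → ℝ) (hH : ContDiff ℝ 2 H)
    (hHnc : ¬ ConvexOn ℝ Set.univ H) (hHncc : ¬ ConcaveOn ℝ Set.univ H) :
    ∃ ε : ℝ, (ε = 1 ∨ ε = -1) ∧ ∃ p₁ p₂ : ℝ, p₁ < p₂ ∧
      ∀ G : ℝ → ℝ, G = (fun p => H (ε * p)) →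
        deriv (deriv G) p₂ < 0 ∧
        (∀ p ∈ Set.Ioo p₁ p₂,
          (G p - G p₁) / (p - p₁) < (G p₂ - G p₁) / (p₂ - p₁)) ∧
        deriv G p₁ < (G p₂ - G p₁) / (p₂ - p₁) ∧
        (G p₂ - G p₁) / (p₂ - p₁) = deriv G p₂ := by
  have h21 : (2 : WithTop ℕ∞) = 1 + 1 := by norm_num
  have hG1 : ContDiff ℝ 1 (deriv H) := by
    have hG := hH
    rw [h21, contDiff_succ_iff_deriv] at hG
    exact hG.2.2
  have hdiff : Differentiable ℝ H := hH.differentiable (by norm_num)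
  have hdiff' : Differentiable ℝ (deriv H) := hG1.differentiable one_ne_zero
  -- there is a point with negative second derivative
  have hy : ∃ y, deriv (deriv H) y < 0 := by
    by_contra hcon
    push_neg at hcon
    refine hHnc (convexOn_of_deriv2_nonneg convex_univ hdiff.continuous.continuousOn
      (by simpa using hdiff.differentiableOn) (by simpa using hdiff'.differentiableOn) ?_)
    intro x _
    have : deriv^[2] H x = deriv (deriv H) x := rfl
    rw [this]
    exact hcon x
  have hx : ∃ x, 0 < deriv (deriv H) x := by
    by_contra hcon
    push_neg at hcon
    refine hHncc (concaveOn_of_deriv2_nonpos convex_univ hdiff.continuous.continuousOn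
      (by simpa using hdiff.differentiableOn) (by simpa using hdiff'.differentiableOn) ?_)
    intro x _
    have : deriv^[2] H x = deriv (deriv H) x := rfl
    rw [this]
    exact hcon x
  obtain ⟨y, hy⟩ := hy
  obtain ⟨x, hx⟩ := hx
  have hxy : x ≠ y := by intro h; rw [h] at hx; linarith
  rcases lt_or_gt_of_ne hxy with hlt | hgt
  · -- ε = 1
    obtain ⟨p₁, p₂, h12, hc1, hc2, hc3, hc4⟩ := key H hH hlt hx hy
    refine ⟨1, Or.inl rfl, p₁, p₂, h12, ?_⟩
    intro G hGdef
    have hGH : G = H := by rw [hGdef]; funext p; rw [one_mul]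
    rw [hGH]
    exact ⟨hc1, hc2, hc3, hc4⟩
  · -- ε = -1
    set K : ℝ → ℝ := fun p => H (-p) with hKdef
    have hK : ContDiff ℝ 2 K := hH.comp (contDiff_id.neg)
    have hK1 : deriv K = fun t => -(deriv H (-t)) := funext fun t => deriv_comp_neg H t
    have hK2 : ∀ t, deriv (deriv K) t = deriv (deriv H) (-t) := by
      intro t
      rw [hK1]
      rw [deriv.fun_neg]
      rw [deriv_comp_neg (deriv H) t]
      ring
    have hKa : 0 < deriv (deriv K) (-x) := by rw [hK2, neg_neg]; exact hx
    have hKb : deriv (deriv K) (-y) < 0 := by rw [hK2, neg_neg]; exact hy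
    obtain ⟨p₁, p₂, h12, hc1, hc2, hc3, hc4⟩ := key K hK (by linarith : -x < -y) hKa hKb
    refine ⟨-1, Or.inr rfl, p₁, p₂, h12, ?_⟩
    intro G hGdef
    have hGK : G = K := by rw [hGdef, hKdef]; funext p; norm_num
    rw [hGK]
    exact ⟨hc1, hc2, hc3, hc4⟩
end
end

section
/- Let H : ℝ^{d₁} × ℝ^{d₂} → ℝ be continuous, fix p₂ ∈ ℝ^{d₂}, and define the reduced Hamiltonian H̄ : ℝ^{d₁} → ℝ by H̄(p₁) = H(p₁, p₂). If u is a viscosity solution of ∂ₜu + H̄(∂_{q₁} u) = 0 on (0,T) × ℝ^{d₁}, then the function v(t, q₁, q₂) = u(t, q₁) + p₂·q₂ is a viscosity solution of ∂ₜv + H(∂_{q₁} v, ∂_{q₂} v) = 0 on (0,T) × ℝ^{d₁} × ℝ^{d₂}. -/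
open Filter Topology Set

noncomputable section

lemma grad_slice_eq (d : ℕ) (p : Ed d) (f : Ed d → ℝ) (x : Ed d)
    (hd : DifferentiableAt ℝ f x)
    (h : IsLocalExtr (fun q => (inner ℝ p q : ℝ) - f q) x) :
    gradient f x = p := by
  have hinner : HasFDerivAt (fun q : Ed d => (inner ℝ p q : ℝ)) (innerSL ℝ p) x :=
    (innerSL ℝ p).hasFDerivAt
  have h0 := h.fderiv_eq_zero
  rw [fderiv_fun_sub hinner.differentiableAt hd, hinner.fderiv, sub_eq_zero] at h0
  have : fderiv ℝ f x = InnerProductSpace.toDual ℝ (Ed d) p := by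
    rw [← h0]; ext y; simp [InnerProductSpace.toDual_apply_apply]
  rw [gradient, this, LinearIsometryEquiv.symm_apply_apply]

/-- Reduction of viscosity solutions: if `u` is a viscosity solution for
the reduced Hamiltonian `H̄(p₁) = H(p₁,p₂)` on `(0,T) × ℝ^{d₁}`, then
`v(t,q₁,q₂) = u(t,q₁) + p₂·q₂` is a viscosity solution for `H` on
`(0,T) × ℝ^{d₁} × ℝ^{d₂}`. -/
theorem statement14 (d₁ d₂ : ℕ) (H : Ed d₁ → Ed d₂ → ℝ)
    (hH : Continuous (fun p : Ed d₁ × Ed d₂ => H p.1 p.2))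
    (p₂ : Ed d₂) (T : ℝ)
    (u : ℝ × Ed d₁ → ℝ)
    (hu : ContinuousOn u (Set.Ioo 0 T ×ˢ Set.univ))
    (hsub : ∀ φ : ℝ × Ed d₁ → ℝ, ContDiff ℝ 1 φ →
      ∀ x ∈ (Set.Ioo (0:ℝ) T ×ˢ (Set.univ : Set (Ed d₁))),
        IsLocalMaxOn (fun y => u y - φ y) (Set.Ioo 0 T ×ˢ Set.univ) x →
        deriv (fun s => φ (s, x.2)) x.1
          + H (gradient (fun q₁ => φ (x.1, q₁)) x.2) p₂ ≤ 0)
    (hsup : ∀ φ : ℝ × Ed d₁ → ℝ, ContDiff ℝ 1 φ →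
      ∀ x ∈ (Set.Ioo (0:ℝ) T ×ˢ (Set.univ : Set (Ed d₁))),
        IsLocalMinOn (fun y => u y - φ y) (Set.Ioo 0 T ×ˢ Set.univ) x →
        deriv (fun s => φ (s, x.2)) x.1
          + H (gradient (fun q₁ => φ (x.1, q₁)) x.2) p₂ ≥ 0)
    (v : ℝ × Ed d₁ × Ed d₂ → ℝ)
    (hv : v = fun x => u (x.1, x.2.1) + (inner ℝ p₂ x.2.2 : ℝ)) :
    ContinuousOn v (Set.Ioo 0 T ×ˢ Set.univ) ∧
    (∀ φ : ℝ × Ed d₁ × Ed d₂ → ℝ, ContDiff ℝ 1 φ →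
      ∀ x ∈ (Set.Ioo (0:ℝ) T ×ˢ (Set.univ : Set (Ed d₁ × Ed d₂))),
        IsLocalMaxOn (fun y => v y - φ y) (Set.Ioo 0 T ×ˢ Set.univ) x →
        deriv (fun s => φ (s, x.2)) x.1
          + H (gradient (fun q₁ => φ (x.1, q₁, x.2.2)) x.2.1)
              (gradient (fun q₂ => φ (x.1, x.2.1, q₂)) x.2.2) ≤ 0) ∧
    (∀ φ : ℝ × Ed d₁ × Ed d₂ → ℝ, ContDiff ℝ 1 φ →
      ∀ x ∈ (Set.Ioo (0:ℝ) T ×ˢ (Set.univ : Set (Ed d₁ × Ed d₂))),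
        IsLocalMinOn (fun y => v y - φ y) (Set.Ioo 0 T ×ˢ Set.univ) x →
        deriv (fun s => φ (s, x.2)) x.1
          + H (gradient (fun q₁ => φ (x.1, q₁, x.2.2)) x.2.1)
              (gradient (fun q₂ => φ (x.1, x.2.1, q₂)) x.2.2) ≥ 0) := by
  subst hv
  have hopen : IsOpen ((Ioo (0:ℝ) T) ×ˢ (univ : Set (Ed d₁ × Ed d₂))) :=
    isOpen_Ioo.prod isOpen_univ
  refine ⟨?_, ?_, ?_⟩
  · exact (hu.comp
      ((continuous_fst.prodMk (continuous_fst.comp continuous_snd)).continuousOn)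
      (fun x hx => ⟨hx.1, trivial⟩)).add
      ((continuous_const.inner (continuous_snd.comp continuous_snd)).continuousOn)
  · intro φ hφ x hx hmax
    obtain ⟨t, q₁, q₂⟩ := x
    have hdφ : Differentiable ℝ φ := hφ.differentiable one_ne_zero
    have hmax' := hmax.isLocalMax (hopen.mem_nhds hx)
    -- gradient of the q₂-slice equals p₂
    have hslice2 : IsLocalMax (fun q => (inner ℝ p₂ q : ℝ) - φ (t, q₁, q)) q₂ := by
      have hc : ContinuousAt (fun q : Ed d₂ => ((t, q₁, q) : ℝ × Ed d₁ × Ed d₂)) q₂ := by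
        fun_prop
      filter_upwards [hc.eventually hmax'] with q hq
      linarith [hq]
    have hgrad2 : gradient (fun q => φ (t, q₁, q)) q₂ = p₂ :=
      grad_slice_eq d₂ p₂ _ q₂ (by fun_prop) (Or.inr hslice2)
    -- test function for u
    set c : ℝ := (inner ℝ p₂ q₂ : ℝ) with hc
    have hψ : ContDiff ℝ 1 (fun y : ℝ × Ed d₁ => φ (y.1, y.2, q₂) - c) := by fun_prop
    have hmaxu : IsLocalMaxOn (fun y => u y - (φ (y.1, y.2, q₂) - c))
        (Ioo (0:ℝ) T ×ˢ univ) (t, q₁) := by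
      have hc2 : ContinuousAt (fun y : ℝ × Ed d₁ => ((y.1, y.2, q₂) : ℝ × Ed d₁ × Ed d₂))
          (t, q₁) := by fun_prop
      have h2 : IsLocalMax (fun y : ℝ × Ed d₁ => u y - (φ (y.1, y.2, q₂) - c)) (t, q₁) := by
        filter_upwards [hc2.eventually hmax'] with y hy
        linarith [hy]
      exact h2.on _
    have key := hsub _ hψ (t, q₁) ⟨hx.1, trivial⟩ hmaxu
    dsimp only at key ⊢
    have hd1 : deriv (fun s => φ (s, q₁, q₂) - c) t = deriv (fun s => φ (s, q₁, q₂)) t :=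
      deriv_sub_const c
    have hg1 : gradient (fun r => φ (t, r, q₂) - c) q₁ = gradient (fun r => φ (t, r, q₂)) q₁ := by
      rw [gradient, gradient, fderiv_sub_const]
    rw [hd1, hg1] at key
    rw [hgrad2]
    exact key
  · intro φ hφ x hx hmin
    obtain ⟨t, q₁, q₂⟩ := x
    have hdφ : Differentiable ℝ φ := hφ.differentiable one_ne_zero
    have hmin' := hmin.isLocalMin (hopen.mem_nhds hx)
    have hslice2 : IsLocalMin (fun q => (inner ℝ p₂ q : ℝ) - φ (t, q₁, q)) q₂ := by
      have hc : ContinuousAt (fun q : Ed d₂ => ((t, q₁, q) : ℝ × Ed d₁ × Ed d₂)) q₂ := by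
        fun_prop
      filter_upwards [hc.eventually hmin'] with q hq
      linarith [hq]
    have hgrad2 : gradient (fun q => φ (t, q₁, q)) q₂ = p₂ :=
      grad_slice_eq d₂ p₂ _ q₂ (by fun_prop) (Or.inl hslice2)
    set c : ℝ := (inner ℝ p₂ q₂ : ℝ) with hc
    have hψ : ContDiff ℝ 1 (fun y : ℝ × Ed d₁ => φ (y.1, y.2, q₂) - c) := by fun_prop
    have hminu : IsLocalMinOn (fun y => u y - (φ (y.1, y.2, q₂) - c))
        (Ioo (0:ℝ) T ×ˢ univ) (t, q₁) := by
      have hc2 : ContinuousAt (fun y : ℝ × Ed d₁ => ((y.1, y.2, q₂) : ℝ × Ed d₁ × Ed d₂))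
          (t, q₁) := by fun_prop
      have h2 : IsLocalMin (fun y : ℝ × Ed d₁ => u y - (φ (y.1, y.2, q₂) - c)) (t, q₁) := by
        filter_upwards [hc2.eventually hmin'] with y hy
        linarith [hy]
      exact h2.on _
    have key := hsup _ hψ (t, q₁) ⟨hx.1, trivial⟩ hminu
    dsimp only at key ⊢
    have hd1 : deriv (fun s => φ (s, q₁, q₂) - c) t = deriv (fun s => φ (s, q₁, q₂)) t :=
      deriv_sub_const c
    have hg1 : gradient (fun r => φ (t, r, q₂) - c) q₁ = gradient (fun r => φ (t, r, q₂)) q₁ := by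
      rw [gradient, gradient, fderiv_sub_const]
    rw [hd1, hg1] at key
    rw [hgrad2]
    exact key
end
end

section
/- Let H(p₁,p₂) = p₁p₂ on ℝ², let f : ℝ → ℝ be a compactly supported C² function with f(x) = x² for x ∈ [−1,1], let b > a > 0, and set u(q₁,q₂) = min(a(f(q₁) − q₂), b(f(q₁) − q₂)). Let R = (R^t)_{t≥0} be a variational operator for H. Then for all t ≥ 0 and all (q₁,q₂) ∈ ℝ² with −1 ≤ q₁ ≤ −(3b/2)t, one has R^t u(q₁,q₂) = min(a((q₁ + at)² − q₂), b((q₁ + bt)² − q₂)). -/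
open Filter Topology Set

noncomputable section

/-- The Clarke derivative (in coordinates) of a Lipschitz function `u : ℝ² → ℝ` at `q`. -/
def clarke2 (u : ℝ × ℝ → ℝ) (q : ℝ × ℝ) : Set (ℝ × ℝ) :=
  convexHull ℝ {p | ∃ qn : ℕ → ℝ × ℝ,
    (∀ n, DifferentiableAt ℝ u (qn n)) ∧
    Tendsto qn atTop (𝓝 q) ∧
    Tendsto (fun n => (fderiv ℝ u (qn n) (1, 0), fderiv ℝ u (qn n) (0, 1))) atTop (𝓝 p)}

/-- A variational operator for the saddle Hamiltonian `H(p₁,p₂) = p₁p₂`, for which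
`∇H(p₁,p₂) = (p₂,p₁)` and `p·∇H(p) − H(p) = p₁p₂`. -/
def IsVariationalOperatorSaddle (R : ℝ → (ℝ × ℝ → ℝ) → (ℝ × ℝ → ℝ)) : Prop :=
  (∀ t : ℝ, 0 ≤ t → ∀ u : ℝ × ℝ → ℝ, (∃ K, LipschitzWith K u) →
      ∃ K, LipschitzWith K (R t u)) ∧
  (∀ t : ℝ, 0 ≤ t → ∀ u v : ℝ × ℝ → ℝ, (∃ K, LipschitzWith K u) →
      (∃ K, LipschitzWith K v) → (∀ q, u q ≤ v q) → ∀ q, R t u q ≤ R t v q) ∧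
  (∀ t : ℝ, 0 ≤ t → ∀ u : ℝ × ℝ → ℝ, (∃ K, LipschitzWith K u) → ∀ c : ℝ, ∀ q,
      R t (fun x => c + u x) q = c + R t u q) ∧
  (∀ t : ℝ, 0 ≤ t → ∀ u : ℝ × ℝ → ℝ, (∃ K, LipschitzWith K u) → ∀ q : ℝ × ℝ,
      ∃ q₀ p₀ : ℝ × ℝ, p₀ ∈ clarke2 u q₀ ∧
        q = (q₀.1 + t * p₀.2, q₀.2 + t * p₀.1) ∧
        R t u q = u q₀ + t * p₀.1 * p₀.2)

theorem vc_hasFDerivAt (f : ℝ → ℝ) (hf : ContDiff ℝ 2 f) (c : ℝ) (q : ℝ × ℝ) :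
    HasFDerivAt (fun x : ℝ × ℝ => c * (f x.1 - x.2))
      (c • ((deriv f q.1) • ContinuousLinearMap.fst ℝ ℝ ℝ - ContinuousLinearMap.snd ℝ ℝ ℝ)) q := by
  have hd : HasDerivAt f (deriv f q.1) q.1 := (hf.differentiable (by norm_num) q.1).hasDerivAt
  exact ((hd.comp_hasFDerivAt q hasFDerivAt_fst).sub hasFDerivAt_snd).const_mul c

theorem vc_grad1 (f : ℝ → ℝ) (hf : ContDiff ℝ 2 f) (c : ℝ) (q : ℝ × ℝ) :
    fderiv ℝ (fun x : ℝ × ℝ => c * (f x.1 - x.2)) q (1, 0) = c * deriv f q.1 := by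
  rw [(vc_hasFDerivAt f hf c q).fderiv]; simp

theorem vc_grad2 (f : ℝ → ℝ) (hf : ContDiff ℝ 2 f) (c : ℝ) (q : ℝ × ℝ) :
    fderiv ℝ (fun x : ℝ × ℝ => c * (f x.1 - x.2)) q (0, 1) = -c := by
  rw [(vc_hasFDerivAt f hf c q).fderiv]; simp

theorem vc_contDiff (f : ℝ → ℝ) (hf : ContDiff ℝ 2 f) (c : ℝ) :
    ContDiff ℝ 1 (fun x : ℝ × ℝ => c * (f x.1 - x.2)) :=
  contDiff_const.mul (((hf.of_le (by norm_num)).comp contDiff_fst).sub contDiff_snd)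

-- gradient at a point off the boundary
theorem grad_pt (f : ℝ → ℝ) (hf : ContDiff ℝ 2 f) (a b : ℝ) (ha : 0 < a) (hab : a < b)
    (u : ℝ × ℝ → ℝ) (hu : u = fun q => min (a * (f q.1 - q.2)) (b * (f q.1 - q.2)))
    (x : ℝ × ℝ) (hne : f x.1 ≠ x.2) :
    ∃ c, (c = a ∨ c = b) ∧ fderiv ℝ u x (1, 0) = c * deriv f x.1 ∧
      fderiv ℝ u x (0, 1) = -c := by
  have hcf : Continuous fun y : ℝ × ℝ => f y.1 := hf.continuous.comp continuous_fst
  rcases lt_or_gt_of_ne hne with hlt | hgt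
  · -- f x.1 < x.2 : u = v_b near x
    refine ⟨b, Or.inr rfl, ?_⟩
    have hU : IsOpen {y : ℝ × ℝ | f y.1 < y.2} := isOpen_lt hcf continuous_snd
    have hev : u =ᶠ[𝓝 x] fun y => b * (f y.1 - y.2) := by
      filter_upwards [hU.mem_nhds hlt] with y hy
      rw [hu]
      exact min_eq_right (by nlinarith [hy])
    have := hev.fderiv_eq (𝕜 := ℝ)
    rw [this, vc_grad1 f hf, vc_grad2 f hf]
    exact ⟨rfl, rfl⟩
  · refine ⟨a, Or.inl rfl, ?_⟩
    have hU : IsOpen {y : ℝ × ℝ | y.2 < f y.1} := isOpen_lt continuous_snd hcf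
    have hev : u =ᶠ[𝓝 x] fun y => a * (f y.1 - y.2) := by
      filter_upwards [hU.mem_nhds hgt] with y hy
      rw [hu]
      exact min_eq_left (by nlinarith [hy])
    have := hev.fderiv_eq (𝕜 := ℝ)
    rw [this, vc_grad1 f hf, vc_grad2 f hf]
    exact ⟨rfl, rfl⟩

theorem not_diff_boundary (f : ℝ → ℝ) (a b : ℝ) (hab : a < b)
    (u : ℝ × ℝ → ℝ) (hu : u = fun q => min (a * (f q.1 - q.2)) (b * (f q.1 - q.2)))
    (q : ℝ × ℝ) (h : f q.1 = q.2) : ¬ DifferentiableAt ℝ u q := by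
  intro hd
  set g : ℝ → ℝ := fun y => u (q.1, q.2 + y) with hgdef
  have hgd : DifferentiableAt ℝ g 0 := by
    have h0 : DifferentiableAt ℝ (fun y : ℝ => ((q.1, q.2 + y) : ℝ × ℝ)) 0 :=
      DifferentiableAt.prodMk (differentiableAt_const _) ((differentiableAt_const _).add differentiableAt_id)
    have hq : ((q.1, q.2 + (0:ℝ)) : ℝ × ℝ) = q := by simp
    have hd' : DifferentiableAt ℝ u ((q.1, q.2 + (0:ℝ)) : ℝ × ℝ) := by rw [hq]; exact hd
    exact DifferentiableAt.comp (0:ℝ) hd' h0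
  have hgval : ∀ y : ℝ, g y = min (a * (-y)) (b * (-y)) := by
    intro y
    simp only [hgdef, hu, h]
    ring_nf
  have hIci : ∀ y ∈ Ici (0:ℝ), g y = -(b * y) := by
    intro y hy
    rw [hgval y, min_eq_right (by nlinarith [mem_Ici.mp hy] : b * (-y) ≤ a * (-y))]
    ring
  have hIic : ∀ y ∈ Iic (0:ℝ), g y = -(a * y) := by
    intro y hy
    rw [hgval y, min_eq_left (by nlinarith [mem_Iic.mp hy] : a * (-y) ≤ b * (-y))]
    ring
  have hb : HasDerivWithinAt (fun y : ℝ => -(b * y)) (-b) (Ici (0:ℝ)) 0 := by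
    simpa [Pi.neg_def] using (((hasDerivAt_id (0:ℝ)).const_mul b).neg).hasDerivWithinAt
  have ha' : HasDerivWithinAt (fun y : ℝ => -(a * y)) (-a) (Iic (0:ℝ)) 0 := by
    simpa [Pi.neg_def] using (((hasDerivAt_id (0:ℝ)).const_mul a).neg).hasDerivWithinAt
  have hg1 : HasDerivWithinAt g (-b) (Ici (0:ℝ)) 0 :=
    hb.congr hIci (by simpa using hIci 0 (by simp))
  have hg2 : HasDerivWithinAt g (-a) (Iic (0:ℝ)) 0 :=
    ha'.congr hIic (by simpa using hIic 0 (by simp))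
  have hu1 : UniqueDiffWithinAt ℝ (Ici (0:ℝ)) 0 := uniqueDiffOn_Ici 0 0 self_mem_Ici
  have hu2 : UniqueDiffWithinAt ℝ (Iic (0:ℝ)) 0 := uniqueDiffOn_Iic 0 0 self_mem_Iic
  have e1 : deriv g 0 = -b := by
    rw [← hgd.hasDerivAt.hasDerivWithinAt.derivWithin hu1, hg1.derivWithin hu1]
  have e2 : deriv g 0 = -a := by
    rw [← hgd.hasDerivAt.hasDerivWithinAt.derivWithin hu2, hg2.derivWithin hu2]
  rw [e1] at e2
  linarith

theorem clarke2_singleton (u v : ℝ × ℝ → ℝ) (q : ℝ × ℝ)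
    (huv : ∀ᶠ x in 𝓝 q, u x = v x) (hv : ContDiff ℝ 1 v) :
    clarke2 u q ⊆ {(fderiv ℝ v q (1, 0), fderiv ℝ v q (0, 1))} := by
  have hS : {p : ℝ × ℝ | ∃ qn : ℕ → ℝ × ℝ,
      (∀ n, DifferentiableAt ℝ u (qn n)) ∧
      Tendsto qn atTop (𝓝 q) ∧
      Tendsto (fun n => (fderiv ℝ u (qn n) (1, 0), fderiv ℝ u (qn n) (0, 1))) atTop (𝓝 p)}
      ⊆ {(fderiv ℝ v q (1, 0), fderiv ℝ v q (0, 1))} := by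
    rintro p ⟨qn, hdiff, hq, hp⟩
    have hloc : ∀ᶠ x in 𝓝 q, ∀ᶠ y in 𝓝 x, u y = v y := huv.eventually_nhds
    have hev : ∀ᶠ n in atTop, ∀ᶠ y in 𝓝 (qn n), u y = v y := hq.eventually hloc
    have hfd : ∀ᶠ n in atTop, fderiv ℝ u (qn n) = fderiv ℝ v (qn n) :=
      hev.mono fun n h => Filter.EventuallyEq.fderiv_eq h
    have hcont : Continuous (fderiv ℝ v) := hv.continuous_fderiv one_ne_zero
    have h1 : Tendsto (fun n => (fderiv ℝ v (qn n) (1, 0), fderiv ℝ v (qn n) (0, 1)))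
        atTop (𝓝 (fderiv ℝ v q (1, 0), fderiv ℝ v q (0, 1))) := by
      have hc : Tendsto (fun n => fderiv ℝ v (qn n)) atTop (𝓝 (fderiv ℝ v q)) :=
        (hcont.tendsto q).comp hq
      exact ((ContinuousLinearMap.apply ℝ ℝ ((1:ℝ), (0:ℝ))).continuous.tendsto _ |>.comp hc).prodMk_nhds
        ((ContinuousLinearMap.apply ℝ ℝ ((0:ℝ), (1:ℝ))).continuous.tendsto _ |>.comp hc)
    have h2 : Tendsto (fun n => (fderiv ℝ u (qn n) (1, 0), fderiv ℝ u (qn n) (0, 1)))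
        atTop (𝓝 (fderiv ℝ v q (1, 0), fderiv ℝ v q (0, 1))) := by
      refine h1.congr' (hfd.mono fun n h => ?_)
      simp only [h]
    exact tendsto_nhds_unique hp h2
  calc clarke2 u q ⊆ convexHull ℝ {(fderiv ℝ v q (1, 0), fderiv ℝ v q (0, 1))} :=
        convexHull_mono hS
    _ = _ := convexHull_singleton _

theorem clarke_min (f : ℝ → ℝ) (hf : ContDiff ℝ 2 f) (a b : ℝ) (ha : 0 < a) (hab : a < b)
    (u : ℝ × ℝ → ℝ) (hu : u = fun q => min (a * (f q.1 - q.2)) (b * (f q.1 - q.2)))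
    (q₀ : ℝ × ℝ) (p : ℝ × ℝ) (hp : p ∈ clarke2 u q₀) :
    ∃ c, a ≤ c ∧ c ≤ b ∧ p = (c * deriv f q₀.1, -c) ∧ u q₀ = c * (f q₀.1 - q₀.2) := by
  have hcf : Continuous fun y : ℝ × ℝ => f y.1 := hf.continuous.comp continuous_fst
  rcases lt_trichotomy (f q₀.1) q₀.2 with hlt | heq | hgt
  · -- u = v_b near q₀
    have hU : IsOpen {y : ℝ × ℝ | f y.1 < y.2} := isOpen_lt hcf continuous_snd
    have hev : ∀ᶠ y in 𝓝 q₀, u y = b * (f y.1 - y.2) := by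
      filter_upwards [hU.mem_nhds hlt] with y hy
      rw [hu]
      exact min_eq_right (by nlinarith [hy])
    have hsub := clarke2_singleton u (fun y : ℝ × ℝ => b * (f y.1 - y.2)) q₀ hev
      (vc_contDiff f hf b)
    have hps := hsub hp
    rw [mem_singleton_iff, vc_grad1 f hf, vc_grad2 f hf] at hps
    exact ⟨b, le_of_lt hab, le_refl b, hps, by
      rw [hu]; exact min_eq_right (by nlinarith)⟩
  · -- boundary case
    set d₀ := deriv f q₀.1 with hd₀
    set T : Set (ℝ × ℝ) := {p | ∃ c, a ≤ c ∧ c ≤ b ∧ p = (c * d₀, -c)} with hT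
    have hTconv : Convex ℝ T := by
      rintro p1 ⟨c1, hc1a, hc1b, rfl⟩ p2 ⟨c2, hc2a, hc2b, rfl⟩ s t hs ht hst
      refine ⟨s * c1 + t * c2, by nlinarith, by nlinarith, ?_⟩
      simp only [Prod.smul_mk, Prod.mk_add_mk, smul_eq_mul, Prod.mk.injEq]
      constructor <;> ring
    have hderivc : Continuous (deriv f) := hf.continuous_deriv (by norm_num)
    have hS : {p : ℝ × ℝ | ∃ qn : ℕ → ℝ × ℝ,
        (∀ n, DifferentiableAt ℝ u (qn n)) ∧
        Tendsto qn atTop (𝓝 q₀) ∧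
        Tendsto (fun n => (fderiv ℝ u (qn n) (1, 0), fderiv ℝ u (qn n) (0, 1))) atTop (𝓝 p)}
        ⊆ T := by
      rintro p ⟨qn, hdiff, hq, hpt⟩
      have hkey : ∀ n, (-(fderiv ℝ u (qn n) (0, 1)) ∈ Icc a b) ∧
          fderiv ℝ u (qn n) (1, 0) = (-(fderiv ℝ u (qn n) (0, 1))) * deriv f (qn n).1 := by
        intro n
        have hne : f (qn n).1 ≠ (qn n).2 := by
          intro h
          exact not_diff_boundary f a b hab u hu (qn n) h (hdiff n)
        obtain ⟨c, hcab, h1, h2⟩ := grad_pt f hf a b ha hab u hu (qn n) hne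
        rw [h1, h2, neg_neg]
        rcases hcab with rfl | rfl
        · exact ⟨⟨le_refl _, le_of_lt hab⟩, rfl⟩
        · exact ⟨⟨le_of_lt hab, le_refl _⟩, rfl⟩
      have hc2 : Tendsto (fun n => fderiv ℝ u (qn n) (0, 1)) atTop (𝓝 p.2) :=
        (continuous_snd.tendsto p).comp hpt
      have hcn : Tendsto (fun n => -(fderiv ℝ u (qn n) (0, 1))) atTop (𝓝 (-p.2)) := hc2.neg
      have hcmem : -p.2 ∈ Icc a b :=
        isClosed_Icc.mem_of_tendsto hcn (Filter.Eventually.of_forall fun n => (hkey n).1)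
      have hd1 : Tendsto (fun n => deriv f (qn n).1) atTop (𝓝 d₀) :=
        (hderivc.tendsto q₀.1).comp ((continuous_fst.tendsto q₀).comp hq)
      have hp1 : Tendsto (fun n => fderiv ℝ u (qn n) (1, 0)) atTop (𝓝 p.1) :=
        (continuous_fst.tendsto p).comp hpt
      have hp1' : Tendsto (fun n => fderiv ℝ u (qn n) (1, 0)) atTop (𝓝 ((-p.2) * d₀)) := by
        have := hcn.mul hd1
        exact this.congr fun n => ((hkey n).2).symm
      have hpe : p.1 = (-p.2) * d₀ := tendsto_nhds_unique hp1 hp1'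
      exact ⟨-p.2, hcmem.1, hcmem.2, by rw [← hpe]; simp⟩
    have hpc : p ∈ T := convexHull_min hS hTconv hp
    obtain ⟨c, hca, hcb, rfl⟩ := hpc
    refine ⟨c, hca, hcb, rfl, ?_⟩
    rw [hu]
    simp only [heq]
    simp
  · have hU : IsOpen {y : ℝ × ℝ | y.2 < f y.1} := isOpen_lt continuous_snd hcf
    have hev : ∀ᶠ y in 𝓝 q₀, u y = a * (f y.1 - y.2) := by
      filter_upwards [hU.mem_nhds hgt] with y hy
      rw [hu]
      exact min_eq_left (by nlinarith [hy])
    have hsub := clarke2_singleton u (fun y : ℝ × ℝ => a * (f y.1 - y.2)) q₀ hev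
      (vc_contDiff f hf a)
    have hps := hsub hp
    rw [mem_singleton_iff, vc_grad1 f hf, vc_grad2 f hf] at hps
    exact ⟨a, le_refl a, le_of_lt hab, hps, by
      rw [hu]; exact min_eq_left (by nlinarith)⟩

theorem lip_vc (f : ℝ → ℝ) (K : NNReal) (hK : LipschitzWith K f) (c : ℝ) :
    ∃ C, LipschitzWith C (fun q : ℝ × ℝ => c * (f q.1 - q.2)) := by
  refine ⟨‖c‖₊ * (K + 1), LipschitzWith.of_dist_le_mul fun x y => ?_⟩
  have h1 : dist (f x.1) (f y.1) ≤ K * dist x.1 y.1 := hK.dist_le_mul _ _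
  have h2 : dist x.1 y.1 ≤ dist x y := by rw [Prod.dist_eq]; exact le_max_left _ _
  have h3 : dist x.2 y.2 ≤ dist x y := by rw [Prod.dist_eq]; exact le_max_right _ _
  have hd : (0:ℝ) ≤ dist x y := dist_nonneg
  have h5 : dist (f x.1) (f y.1) ≤ K * dist x y :=
    h1.trans (by nlinarith [K.coe_nonneg])
  rw [Real.dist_eq] at h3 h5 ⊢
  have key : |c * (f x.1 - x.2) - c * (f y.1 - y.2)| = |c| * |(f x.1 - f y.1) - (x.2 - y.2)| := by
    rw [← abs_mul]; ring_nf
  rw [key]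
  have h4 : |(f x.1 - f y.1) - (x.2 - y.2)| ≤ |f x.1 - f y.1| + |x.2 - y.2| := abs_sub _ _
  push_cast [Real.norm_eq_abs]
  nlinarith [abs_nonneg c, mul_le_mul_of_nonneg_left
    (h4.trans (by linarith : |f x.1 - f y.1| + |x.2 - y.2| ≤ (K + 1) * dist x y)) (abs_nonneg c)]

theorem deriv_icc (f : ℝ → ℝ) (hf : ContDiff ℝ 2 f)
    (hfx : ∀ x ∈ Set.Icc (-1:ℝ) 1, f x = x ^ 2) :
    ∀ x ∈ Set.Icc (-1:ℝ) 1, deriv f x = 2 * x := by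
  intro x hx
  have hud : UniqueDiffWithinAt ℝ (Set.Icc (-1:ℝ) 1) x :=
    (uniqueDiffOn_Icc (by norm_num : (-1:ℝ) < 1)) x hx
  have h1 : HasDerivWithinAt f (deriv f x) (Set.Icc (-1:ℝ) 1) x :=
    ((hf.differentiable (by norm_num) x).hasDerivAt).hasDerivWithinAt
  have h2 : HasDerivWithinAt f (2 * x) (Set.Icc (-1:ℝ) 1) x := by
    have h3 : HasDerivWithinAt (fun y : ℝ => y ^ 2) (2 * x) (Set.Icc (-1:ℝ) 1) x := by
      simpa using (hasDerivAt_pow 2 x).hasDerivWithinAt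
    exact h3.congr hfx (hfx x hx)
  rw [← h1.derivWithin hud, h2.derivWithin hud]


theorem endpoint_min (a b c t q₁ q₂ : ℝ) (hab : a < b) (hac : a ≤ c) (hcb : c ≤ b)
    (ht : 0 ≤ t) (hq : q₁ ≤ -(3 * b / 2) * t) :
    min (a * ((q₁ + a * t) ^ 2 - q₂)) (b * ((q₁ + b * t) ^ 2 - q₂))
      ≤ c * ((q₁ + c * t) ^ 2 - q₂) := by
  set A := a * ((q₁ + a * t) ^ 2 - q₂) with hA
  set B := b * ((q₁ + b * t) ^ 2 - q₂) with hB
  set C := c * ((q₁ + c * t) ^ 2 - q₂) with hC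
  have h1 : min A B ≤ A := min_le_left _ _
  have h2 : min A B ≤ B := min_le_right _ _
  have hprod : 0 ≤ (b - a) * (b - c) * (c - a) * t * (-2 * q₁ - t * (a + b + c)) := by
    have h5 : 0 ≤ -2 * q₁ - t * (a + b + c) := by nlinarith
    have := mul_nonneg (mul_nonneg (mul_nonneg (mul_nonneg
      (by linarith : (0:ℝ) ≤ b - a) (by linarith : (0:ℝ) ≤ b - c))
      (by linarith : (0:ℝ) ≤ c - a)) ht) h5
    linarith
  have key : (b - c) * A + (c - a) * B ≤ (b - a) * C := by nlinarith [hprod]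
  have h3 : (b - a) * min A B ≤ (b - a) * C := by nlinarith [h1, h2, key]
  exact le_of_mul_le_mul_left h3 (by linarith)


/-- Explicit value of the variational solution for the saddle Hamiltonian
`H(p₁,p₂) = p₁p₂` and the initial condition
`u(q₁,q₂) = min(a(f(q₁) − q₂), b(f(q₁) − q₂))` in the region `−1 ≤ q₁ ≤ −(3b/2)t`. -/
theorem statement15 (f : ℝ → ℝ) (hf : ContDiff ℝ 2 f) (hsupp : HasCompactSupport f)
    (hfx : ∀ x ∈ Set.Icc (-1:ℝ) 1, f x = x ^ 2)
    (a b : ℝ) (ha : 0 < a) (hab : a < b)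
    (u : ℝ × ℝ → ℝ)
    (hu : u = fun q => min (a * (f q.1 - q.2)) (b * (f q.1 - q.2)))
    (R : ℝ → (ℝ × ℝ → ℝ) → (ℝ × ℝ → ℝ))
    (hR : IsVariationalOperatorSaddle R) :
    ∀ t : ℝ, 0 ≤ t → ∀ q : ℝ × ℝ, -1 ≤ q.1 → q.1 ≤ -(3 * b / 2) * t →
      R t u q = min (a * ((q.1 + a * t) ^ 2 - q.2)) (b * ((q.1 + b * t) ^ 2 - q.2)) := by
  intro t ht q hq1 hq2
  obtain ⟨Kf, hKf⟩ := ContDiff.lipschitzWith_of_hasCompactSupport hsupp hf (by norm_num)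
  have hlipv : ∀ c : ℝ, ∃ C, LipschitzWith C (fun x : ℝ × ℝ => c * (f x.1 - x.2)) :=
    fun c => lip_vc f Kf hKf c
  have hlipu : ∃ C, LipschitzWith C u := by
    obtain ⟨Ca, hCa⟩ := hlipv a
    obtain ⟨Cb, hCb⟩ := hlipv b
    exact ⟨max Ca Cb, by rw [hu]; exact hCa.min hCb⟩
  have hb0 : (0:ℝ) < b := lt_trans ha hab
  -- geometry of the characteristic point, common to both bounds
  have hgeo : ∀ c : ℝ, 0 < c → c ≤ b → ∀ x : ℝ, q.1 = x + t * (-c) →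
      x ∈ Set.Icc (-1:ℝ) 1 := by
    intro c hc hcb x hx
    have hct : 0 ≤ c * t := mul_nonneg hc.le ht
    have hbt : c * t ≤ b * t := mul_le_mul_of_nonneg_right hcb ht
    constructor
    · nlinarith
    · nlinarith
  -- value of R t applied to a single branch v_c
  have hbranch : ∀ c : ℝ, 0 < c → c ≤ b →
      R t (fun x : ℝ × ℝ => c * (f x.1 - x.2)) q = c * ((q.1 + c * t) ^ 2 - q.2) := by
    intro c hc hcb
    obtain ⟨q₀, p₀, hp₀, hqe, hval⟩ := hR.2.2.2 t ht _ (hlipv c) q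
    have hps := clarke2_singleton _ _ q₀ (Filter.Eventually.of_forall fun _ => rfl)
      (vc_contDiff f hf c) hp₀
    rw [mem_singleton_iff, vc_grad1 f hf, vc_grad2 f hf] at hps
    have hq1e : q.1 = q₀.1 + t * (-c) := by rw [hqe, hps]
    have hq2e : q.2 = q₀.2 + t * (c * deriv f q₀.1) := by rw [hqe, hps]
    have hxm : q₀.1 ∈ Set.Icc (-1:ℝ) 1 := hgeo c hc hcb q₀.1 hq1e
    have hder : deriv f q₀.1 = 2 * q₀.1 := deriv_icc f hf hfx q₀.1 hxm
    have hfq : f q₀.1 = q₀.1 ^ 2 := hfx q₀.1 hxm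
    rw [hps] at hval
    simp only at hval
    rw [hval, hfq, hder]
    have hx' : q.1 + c * t = q₀.1 := by rw [hq1e]; ring
    rw [hx']
    rw [hder] at hq2e
    rw [hq2e]
    ring
  -- upper bound
  have hupper : ∀ c : ℝ, 0 < c → c ≤ b → (∀ x, u x ≤ c * (f x.1 - x.2)) →
      R t u q ≤ c * ((q.1 + c * t) ^ 2 - q.2) := by
    intro c hc hcb hle
    have hmono := hR.2.1 t ht u _ hlipu (hlipv c) hle q
    rw [hbranch c hc hcb] at hmono
    exact hmono
  have hua : R t u q ≤ a * ((q.1 + a * t) ^ 2 - q.2) :=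
    hupper a ha hab.le (by intro x; rw [hu]; exact min_le_left _ _)
  have hub : R t u q ≤ b * ((q.1 + b * t) ^ 2 - q.2) :=
    hupper b hb0 le_rfl (by intro x; rw [hu]; exact min_le_right _ _)
  -- lower bound via the variational property on u itself
  obtain ⟨q₀, p₀, hp₀, hqe, hval⟩ := hR.2.2.2 t ht u hlipu q
  obtain ⟨c, hca, hcb, hpc, huq⟩ := clarke_min f hf a b ha hab u hu q₀ p₀ hp₀
  have hc0 : 0 < c := lt_of_lt_of_le ha hca
  have hq1e : q.1 = q₀.1 + t * (-c) := by rw [hqe, hpc]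
  have hq2e : q.2 = q₀.2 + t * (c * deriv f q₀.1) := by rw [hqe, hpc]
  have hxm : q₀.1 ∈ Set.Icc (-1:ℝ) 1 := hgeo c hc0 hcb q₀.1 hq1e
  have hder : deriv f q₀.1 = 2 * q₀.1 := deriv_icc f hf hfx q₀.1 hxm
  have hfq : f q₀.1 = q₀.1 ^ 2 := hfx q₀.1 hxm
  rw [hpc] at hval
  simp only at hval
  rw [huq, hfq, hder] at hval
  have hx' : q.1 + c * t = q₀.1 := by rw [hq1e]; ring
  have hRval : R t u q = c * ((q.1 + c * t) ^ 2 - q.2) := by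
    rw [hval, hx']
    rw [hder] at hq2e
    rw [hq2e]
    ring
  have hlow : min (a * ((q.1 + a * t) ^ 2 - q.2)) (b * ((q.1 + b * t) ^ 2 - q.2))
      ≤ R t u q := by
    rw [hRval]
    exact endpoint_min a b c t q.1 q.2 hab hca hcb ht hq2
  exact le_antisymm (le_min hua hub) hlow
end
end
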